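/- arXiv:2512.24039 — 3 statements merged into one kernel-verified Lean document; each statement's English description precedes it below -/
import Mathlib

section
/- Let $g : [-1,1] \to \mathbb{R}$ be Lipschitz continuous with Chebyshev coefficients $\{a_n\}$ and let $g_{\le p}(x) := \sum_{n=0}^p a_n T_n(x)$ be the degree-$p$ Chebyshev partial sum. With $r(\kappa) := \int_{-1}^1 g(x) e^{\mathrm{i}\kappa x} w(x)\,dx$ and $r_{\le p}(\kappa) := \int_{-1}^1 g_{\le p}(x) e^{\mathrm{i}\kappa x} w(x)\,dx$, for all $\kappa \in \mathbb{R}$ one has the uniform truncation bound $|r(\kappa) - r_{\le p}(\kappa)| \le \frac{\pi}{\sqrt{2}} \big(\sum_{n > p} a_n^2\big)^{1/2} = \sqrt{\pi}\, \|g - g_{\le p}\|_w$. -/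
open MeasureTheory Real Set



noncomputable def chebT (n : ℕ) (x : ℝ) : ℝ := Real.cos (n * Real.arccos x)

noncomputable def chebW (x : ℝ) : ℝ := 1 / Real.sqrt (1 - x ^ 2)

lemma chebW_nonneg (x : ℝ) : 0 ≤ chebW x := by unfold chebW; positivity

lemma chebT_abs_le (n : ℕ) (x : ℝ) : |chebT n x| ≤ 1 := Real.abs_cos_le_one _

lemma chebW_measurable : Measurable chebW := by
  have : Continuous fun x : ℝ => Real.sqrt (1 - x ^ 2) :=
    Real.continuous_sqrt.comp (by continuity)
  exact measurable_const.div this.measurable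

lemma uIoc_eq : Set.uIoc (-1:ℝ) 1 = Set.Ioc (-1:ℝ) 1 := Set.uIoc_of_le (by norm_num)

lemma wInt : IntervalIntegrable chebW volume (-1:ℝ) 1 := by
  have h1 : IntervalIntegrable (fun x : ℝ => (1 - x) ^ (-(1/2) : ℝ)) volume (-1) 1 := by
    have := (intervalIntegral.intervalIntegrable_rpow' (a := (0:ℝ)) (b := 2)
      (r := -(1/2)) (by norm_num)).comp_sub_left 1
    norm_num at this
    exact this.symm
  have h2 : IntervalIntegrable (fun x : ℝ => (1 + x) ^ (-(1/2) : ℝ)) volume (-1) 1 := by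
    have := (intervalIntegral.intervalIntegrable_rpow' (a := (0:ℝ)) (b := 2)
      (r := -(1/2)) (by norm_num)).comp_add_left 1
    norm_num at this
    exact this
  refine (h1.add h2).mono_fun' chebW_measurable.aestronglyMeasurable.restrict ?_
  rw [Filter.EventuallyLE, uIoc_eq, ae_restrict_iff' measurableSet_Ioc]
  refine Filter.Eventually.of_forall fun x hx => ?_
  have hx1 : -1 < x := hx.1
  have hx2 : x ≤ 1 := hx.2
  rw [Real.norm_of_nonneg (chebW_nonneg x)]
  have hrw : ∀ y : ℝ, 0 ≤ y → y ^ (-(1/2) : ℝ) = 1 / Real.sqrt y := by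
    intro y hy
    rw [Real.rpow_neg hy, Real.sqrt_eq_rpow]; norm_num
  rcases le_total x 0 with hx0 | hx0
  · have h1x : (0:ℝ) < 1 + x := by linarith
    have hle : 1 + x ≤ 1 - x ^ 2 := by nlinarith
    have : chebW x ≤ (1 + x) ^ (-(1/2) : ℝ) := by
      rw [hrw _ h1x.le]
      unfold chebW
      apply one_div_le_one_div_of_le (Real.sqrt_pos.mpr h1x)
      exact Real.sqrt_le_sqrt hle
    have hnn : (0:ℝ) ≤ (1 - x) ^ (-(1/2) : ℝ) := Real.rpow_nonneg (by linarith) _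
    linarith
  · rcases eq_or_lt_of_le hx2 with rfl | hx2'
    · have : chebW 1 = 0 := by unfold chebW; norm_num
      rw [this]
      have hnn1 : (0:ℝ) ≤ (1 - (1:ℝ)) ^ (-(1/2) : ℝ) := Real.rpow_nonneg (by norm_num) _
      have hnn2 : (0:ℝ) ≤ (1 + (1:ℝ)) ^ (-(1/2) : ℝ) := Real.rpow_nonneg (by norm_num) _
      linarith
    · have h1x : (0:ℝ) < 1 - x := by linarith
      have hle : 1 - x ≤ 1 - x ^ 2 := by nlinarith
      have : chebW x ≤ (1 - x) ^ (-(1/2) : ℝ) := by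
        rw [hrw _ h1x.le]
        unfold chebW
        apply one_div_le_one_div_of_le (Real.sqrt_pos.mpr h1x)
        exact Real.sqrt_le_sqrt hle
      have hnn : (0:ℝ) ≤ (1 + x) ^ (-(1/2) : ℝ) := Real.rpow_nonneg (by linarith) _
      linarith
lemma intInt_of_bound {E : Type*} [NormedAddCommGroup E] (f : ℝ → E) (C : ℝ)
    (hm : AEStronglyMeasurable f (volume.restrict (Set.Ioc (-1:ℝ) 1)))
    (hb : ∀ x ∈ Set.Ioc (-1:ℝ) 1, ‖f x‖ ≤ C * chebW x) :
    IntervalIntegrable f volume (-1) 1 := by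
  refine (wInt.const_mul C).mono_fun' ?_ ?_
  · rwa [uIoc_eq]
  · rw [Filter.EventuallyLE, uIoc_eq, ae_restrict_iff' measurableSet_Ioc]
    exact Filter.Eventually.of_forall hb

lemma intW_eq : ∫ x in (-1:ℝ)..1, chebW x = π := by
  have h : ∫ x in (-1:ℝ)..1, chebW x = Real.arcsin 1 - Real.arcsin (-1) := by
    refine intervalIntegral.integral_eq_sub_of_hasDeriv_right_of_le (by norm_num)
      Real.continuous_arcsin.continuousOn (fun x hx => ?_) wInt
    exact (Real.hasDerivAt_arcsin (ne_of_gt hx.1) (ne_of_lt hx.2)).hasDerivWithinAt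
  rw [h, Real.arcsin_one, Real.arcsin_neg_one]; ring

lemma intCos (c : ℝ) (hc : c ≠ 0) :
    ∫ x in (-1:ℝ)..1, Real.cos (c * Real.arccos x) * chebW x = Real.sin (c * π) / c := by
  have hint : IntervalIntegrable (fun x => Real.cos (c * Real.arccos x) * chebW x)
      volume (-1) 1 := by
    refine intInt_of_bound _ 1 ?_ ?_
    · exact ((Real.continuous_cos.comp (continuous_const.mul
        Real.continuous_arccos)).aestronglyMeasurable.restrict.mul
        chebW_measurable.aestronglyMeasurable.restrict)
    · intro x hx
      rw [norm_mul, Real.norm_of_nonneg (chebW_nonneg x), one_mul]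
      exact mul_le_of_le_one_left (chebW_nonneg x)
        (by rw [Real.norm_eq_abs]; exact Real.abs_cos_le_one _)
  have h : ∫ x in (-1:ℝ)..1, Real.cos (c * Real.arccos x) * chebW x =
      (-Real.sin (c * Real.arccos 1) / c) - (-Real.sin (c * Real.arccos (-1)) / c) := by
    refine intervalIntegral.integral_eq_sub_of_hasDeriv_right_of_le
      (f := fun y => -Real.sin (c * Real.arccos y) / c) (by norm_num)
      (Continuous.continuousOn (by continuity)) (fun x hx => ?_) hint
    have ha := Real.hasDerivAt_arccos (ne_of_gt hx.1) (ne_of_lt hx.2)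
    have h1 : HasDerivAt (fun y : ℝ => c * Real.arccos y)
        (c * -(1 / Real.sqrt (1 - x ^ 2))) x := ha.const_mul c
    have h2 := ((Real.hasDerivAt_sin (c * Real.arccos x)).comp x h1).neg.div_const c
    have heq : -(Real.cos (c * Real.arccos x) * (c * -(1 / Real.sqrt (1 - x ^ 2)))) / c
        = Real.cos (c * Real.arccos x) * chebW x := by
      have hs : Real.sqrt (1 - x ^ 2) ≠ 0 :=
        ne_of_gt (Real.sqrt_pos.mpr (by nlinarith [hx.1, hx.2]))
      unfold chebW; field_simp
    rw [heq] at h2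
    exact h2.hasDerivWithinAt
  rw [h, Real.arccos_one, Real.arccos_neg_one]
  simp; ring

lemma intCos_int (k : ℤ) (hk : k ≠ 0) :
    ∫ x in (-1:ℝ)..1, Real.cos ((k:ℝ) * Real.arccos x) * chebW x = 0 := by
  rw [intCos _ (by exact_mod_cast hk), Real.sin_int_mul_pi, zero_div]
lemma cos_mul_w_int (c : ℝ) : IntervalIntegrable
    (fun x => Real.cos (c * Real.arccos x) * chebW x) volume (-1) 1 := by
  refine intInt_of_bound _ 1 ?_ ?_
  · exact ((Real.continuous_cos.comp (continuous_const.mul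
      Real.continuous_arccos)).aestronglyMeasurable.restrict.mul
      chebW_measurable.aestronglyMeasurable.restrict)
  · intro x hx
    rw [norm_mul, Real.norm_of_nonneg (chebW_nonneg x), one_mul]
    exact mul_le_of_le_one_left (chebW_nonneg x)
      (by rw [Real.norm_eq_abs]; exact Real.abs_cos_le_one _)

lemma orth (n m : ℕ) (hm : 1 ≤ m) :
    ∫ x in (-1:ℝ)..1, chebT n x * chebT m x * chebW x
      = if n = m then π / 2 else 0 := by
  have hsplit : ∀ x : ℝ, chebT n x * chebT m x * chebW x
      = (Real.cos (((n:ℝ) + m) * Real.arccos x) * chebW x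
        + Real.cos (((n:ℝ) - m) * Real.arccos x) * chebW x) / 2 := by
    intro x
    unfold chebT
    rw [show ((n:ℝ) + m) * Real.arccos x = n * Real.arccos x + m * Real.arccos x by ring,
      show ((n:ℝ) - m) * Real.arccos x = n * Real.arccos x - m * Real.arccos x by ring,
      Real.cos_add, Real.cos_sub]
    ring
  rw [intervalIntegral.integral_congr (fun x _ => hsplit x), intervalIntegral.integral_div,
    intervalIntegral.integral_add (cos_mul_w_int _) (cos_mul_w_int _)]
  have h1 : ∫ x in (-1:ℝ)..1, Real.cos (((n:ℝ) + m) * Real.arccos x) * chebW x = 0 := by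
    have := intCos_int ((n:ℤ) + m) (by omega)
    push_cast at this
    exact this
  rw [h1]
  by_cases hnm : n = m
  · subst hnm
    have h2 : ∀ x : ℝ, Real.cos (((n:ℝ) - n) * Real.arccos x) * chebW x = chebW x := by
      intro x; rw [sub_self, zero_mul, Real.cos_zero, one_mul]
    rw [intervalIntegral.integral_congr (fun x _ => h2 x), intW_eq, if_pos rfl]
    ring
  · have h2 : ∫ x in (-1:ℝ)..1, Real.cos (((n:ℝ) - m) * Real.arccos x) * chebW x = 0 := by
      have := intCos_int ((n:ℤ) - m) (by omega)
      push_cast at this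
      exact this
    rw [h2, if_neg hnm]
    ring
lemma chebT_continuous (n : ℕ) : Continuous (chebT n) :=
  Real.continuous_cos.comp (continuous_const.mul Real.continuous_arccos)

set_option maxHeartbeats 1000000 in
lemma key (a : ℕ → ℝ) (p : ℕ) (h : ℝ → ℝ) (M : ℝ)
    (hmeas : AEStronglyMeasurable h (volume.restrict (Set.Ioc (-1:ℝ) 1)))
    (hM : ∀ x ∈ Set.Icc (-1:ℝ) 1, |h x| ≤ M)
    (hsum : Summable fun n => |a n|)
    (htail : ∀ x ∈ Set.Icc (-1:ℝ) 1,
      HasSum (fun k => a (k + (p+1)) * chebT (k + (p+1)) x) (h x)) :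
    HasSum (fun k => π/2 * (a (k + (p+1)))^2)
      (∫ x in (-1:ℝ)..1, (h x)^2 * chebW x) := by
  have hone : ((-1:ℝ) ≤ 1) := by norm_num
  have hWμ : Integrable chebW (volume.restrict (Set.Ioc (-1:ℝ) 1)) := wInt.1
  have hWint : ∫ x in Set.Ioc (-1:ℝ) 1, chebW x = π := by
    rw [← intervalIntegral.integral_of_le hone]; exact intW_eq
  have hsum' : Summable fun k => |a (k + (p+1))| := (summable_nat_add_iff (p+1)).2 hsum
  have interchange : ∀ (φ : ℝ → ℝ) (Cφ : ℝ),
      AEStronglyMeasurable φ (volume.restrict (Set.Ioc (-1:ℝ) 1)) →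
      (∀ x ∈ Set.Ioc (-1:ℝ) 1, |φ x| ≤ Cφ * chebW x) →
      HasSum (fun k : ℕ => a (k+(p+1)) * ∫ x in Set.Ioc (-1:ℝ) 1, chebT (k+(p+1)) x * φ x)
        (∫ x in Set.Ioc (-1:ℝ) 1, h x * φ x) := by
    intro φ Cφ hφm hφb
    set F : ℕ → ℝ → ℝ := fun k x => a (k+(p+1)) * (chebT (k+(p+1)) x * φ x) with hF
    have hFb : ∀ k, ∀ x ∈ Set.Ioc (-1:ℝ) 1, ‖F k x‖ ≤ (|a (k+(p+1))| * Cφ) * chebW x := by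
      intro k x hx
      have h1 : |chebT (k+(p+1)) x| * |φ x| ≤ 1 * (Cφ * chebW x) :=
        mul_le_mul (chebT_abs_le _ _) (hφb x hx) (abs_nonneg _) zero_le_one
      calc ‖F k x‖ = |a (k+(p+1))| * (|chebT (k+(p+1)) x| * |φ x|) := by
            rw [hF]; simp [abs_mul]
        _ ≤ |a (k+(p+1))| * (1 * (Cφ * chebW x)) :=
            mul_le_mul_of_nonneg_left h1 (abs_nonneg _)
        _ = (|a (k+(p+1))| * Cφ) * chebW x := by ring
    have hFint : ∀ k, Integrable (F k) (volume.restrict (Set.Ioc (-1:ℝ) 1)) := by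
      intro k
      refine (intInt_of_bound (F k) (|a (k+(p+1))| * Cφ) ?_ (hFb k)).1
      exact (aestronglyMeasurable_const.mul
        ((chebT_continuous _).aestronglyMeasurable.restrict.mul hφm))
    have hFnorm : Summable fun k => ∫ x in Set.Ioc (-1:ℝ) 1, ‖F k x‖ := by
      refine Summable.of_nonneg_of_le
        (fun k => integral_nonneg fun x => norm_nonneg _) (fun k => ?_)
        (hsum'.mul_right (Cφ * π))
      have hle : ∫ x in Set.Ioc (-1:ℝ) 1, ‖F k x‖ ≤
          ∫ x in Set.Ioc (-1:ℝ) 1, (|a (k+(p+1))| * Cφ) * chebW x := by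
        refine integral_mono_ae (hFint k).norm (hWμ.const_mul _) ?_
        rw [Filter.EventuallyLE, ae_restrict_iff' measurableSet_Ioc]
        exact Filter.Eventually.of_forall (hFb k)
      rw [integral_const_mul, hWint] at hle
      calc ∫ x in Set.Ioc (-1:ℝ) 1, ‖F k x‖ ≤ |a (k+(p+1))| * Cφ * π := hle
        _ = |a (k+(p+1))| * (Cφ * π) := by ring
    have hkey := MeasureTheory.hasSum_integral_of_summable_integral_norm hFint hFnorm
    have htsum : ∫ x in Set.Ioc (-1:ℝ) 1, (∑' k, F k x) =
        ∫ x in Set.Ioc (-1:ℝ) 1, h x * φ x := by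
      refine integral_congr_ae ?_
      rw [Filter.EventuallyEq, ae_restrict_iff' measurableSet_Ioc]
      refine Filter.Eventually.of_forall fun x hx => ?_
      have hh := (htail x (Set.Ioc_subset_Icc_self hx)).mul_right (φ x)
      simpa [hF, mul_assoc] using hh.tsum_eq
    rw [htsum] at hkey
    have hFi : ∀ k, (∫ x in Set.Ioc (-1:ℝ) 1, F k x) =
        a (k+(p+1)) * ∫ x in Set.Ioc (-1:ℝ) 1, chebT (k+(p+1)) x * φ x := fun k =>
      integral_const_mul _ _
    simpa [funext hFi] using hkey
  have step1 : ∀ j : ℕ, (∫ x in Set.Ioc (-1:ℝ) 1, h x * (chebT (j+(p+1)) x * chebW x)) =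
      π/2 * a (j+(p+1)) := by
    intro j
    have hφm : AEStronglyMeasurable (fun x => chebT (j+(p+1)) x * chebW x)
        (volume.restrict (Set.Ioc (-1:ℝ) 1)) :=
      (chebT_continuous _).aestronglyMeasurable.restrict.mul
        chebW_measurable.aestronglyMeasurable.restrict
    have hφb : ∀ x ∈ Set.Ioc (-1:ℝ) 1, |chebT (j+(p+1)) x * chebW x| ≤ 1 * chebW x := by
      intro x hx
      rw [abs_mul, abs_of_nonneg (chebW_nonneg x)]
      exact mul_le_mul_of_nonneg_right (chebT_abs_le _ _) (chebW_nonneg x)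
    have H := interchange _ 1 hφm hφb
    have hterm : ∀ k : ℕ,
        a (k+(p+1)) * (∫ x in Set.Ioc (-1:ℝ) 1, chebT (k+(p+1)) x * (chebT (j+(p+1)) x * chebW x))
        = if k = j then π/2 * a (j+(p+1)) else 0 := by
      intro k
      have ho := orth (k+(p+1)) (j+(p+1)) (by omega)
      rw [intervalIntegral.integral_of_le hone] at ho
      have hco : (∫ x in Set.Ioc (-1:ℝ) 1, chebT (k+(p+1)) x * (chebT (j+(p+1)) x * chebW x))
          = ∫ x in Set.Ioc (-1:ℝ) 1, chebT (k+(p+1)) x * chebT (j+(p+1)) x * chebW x := by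
        refine integral_congr_ae (Filter.Eventually.of_forall fun x => ?_)
        ring
      rw [hco, ho]
      by_cases hkj : k = j
      · subst hkj; rw [if_pos rfl, if_pos rfl]; ring
      · rw [if_neg (by omega), if_neg hkj, mul_zero]
    rw [funext hterm] at H
    exact H.unique (hasSum_ite_eq j _)
  have hφm2 : AEStronglyMeasurable (fun x => h x * chebW x)
      (volume.restrict (Set.Ioc (-1:ℝ) 1)) :=
    hmeas.mul chebW_measurable.aestronglyMeasurable.restrict
  have hφb2 : ∀ x ∈ Set.Ioc (-1:ℝ) 1, |h x * chebW x| ≤ M * chebW x := by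
    intro x hx
    rw [abs_mul, abs_of_nonneg (chebW_nonneg x)]
    exact mul_le_mul_of_nonneg_right (hM x (Set.Ioc_subset_Icc_self hx)) (chebW_nonneg x)
  have H2 := interchange _ M hφm2 hφb2
  have hterm2 : ∀ k : ℕ,
      a (k+(p+1)) * (∫ x in Set.Ioc (-1:ℝ) 1, chebT (k+(p+1)) x * (h x * chebW x))
      = π/2 * (a (k+(p+1)))^2 := by
    intro k
    have hco : (∫ x in Set.Ioc (-1:ℝ) 1, chebT (k+(p+1)) x * (h x * chebW x))
        = ∫ x in Set.Ioc (-1:ℝ) 1, h x * (chebT (k+(p+1)) x * chebW x) := by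
      refine integral_congr_ae (Filter.Eventually.of_forall fun x => ?_)
      ring
    rw [hco, step1 k]
    ring
  rw [funext hterm2] at H2
  have hfin : (∫ x in Set.Ioc (-1:ℝ) 1, h x * (h x * chebW x)) =
      ∫ x in (-1:ℝ)..1, (h x)^2 * chebW x := by
    rw [← intervalIntegral.integral_of_le hone]
    refine intervalIntegral.integral_congr fun x _ => ?_
    ring
  rwa [hfin] at H2
set_option maxHeartbeats 1000000 in
theorem covariance_truncation_bound
    (g : ℝ → ℝ) (L : NNReal) (hg : LipschitzOnWith L g (Set.Icc (-1:ℝ) 1))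
    (a : ℕ → ℝ)
    (ha : ∀ n : ℕ, a n = ((2 - if n = 0 then (1:ℝ) else 0) / Real.pi) *
      ∫ x in (-1:ℝ)..1, g x * chebT n x * chebW x)
    (habs : ∀ x ∈ Set.Icc (-1:ℝ) 1, Summable fun n : ℕ => |a n * chebT n x|)
    (hexp : ∀ x ∈ Set.Icc (-1:ℝ) 1, HasSum (fun n : ℕ => a n * chebT n x) (g x))
    (p : ℕ) :
    (∀ κ : ℝ,
      ‖(∫ x in (-1:ℝ)..1, (g x : ℂ) * Complex.exp (Complex.I * κ * x) * (chebW x : ℂ)) -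
        (∫ x in (-1:ℝ)..1,
          ((∑ n ∈ Finset.range (p + 1), a n * chebT n x : ℝ) : ℂ) *
            Complex.exp (Complex.I * κ * x) * (chebW x : ℂ))‖ ≤
        (Real.pi / Real.sqrt 2) * Real.sqrt (∑' n : ℕ, (a (n + p + 1)) ^ 2)) ∧
    (Real.pi / Real.sqrt 2) * Real.sqrt (∑' n : ℕ, (a (n + p + 1)) ^ 2) =
      Real.sqrt Real.pi *
        Real.sqrt (∫ x in (-1:ℝ)..1,
          (g x - ∑ n ∈ Finset.range (p + 1), a n * chebT n x) ^ 2 * chebW x) := by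
  have hone : ((-1:ℝ) ≤ 1) := by norm_num
  set S : ℝ → ℝ := fun x => ∑ n ∈ Finset.range (p + 1), a n * chebT n x with hSdef
  have habs1 : Summable fun n => |a n| := by
    have h1 := habs 1 (by constructor <;> norm_num)
    simpa [chebT, Real.arccos_one] using h1
  obtain ⟨Cg, hCg⟩ := (isCompact_Icc (a := (-1:ℝ)) (b := 1)).exists_bound_of_continuousOn
    hg.continuousOn
  have hSb : ∀ x, |S x| ≤ ∑' n, |a n| := by
    intro x
    calc |S x| ≤ ∑ n ∈ Finset.range (p+1), |a n * chebT n x| :=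
          Finset.abs_sum_le_sum_abs _ _
      _ ≤ ∑ n ∈ Finset.range (p+1), |a n| := by
          refine Finset.sum_le_sum fun n _ => ?_
          rw [abs_mul]
          exact mul_le_of_le_one_right (abs_nonneg _) (chebT_abs_le _ _)
      _ ≤ ∑' n, |a n| := Summable.sum_le_tsum _ (fun n _ => abs_nonneg _) habs1
  have hMh : ∀ x ∈ Set.Icc (-1:ℝ) 1, |g x - S x| ≤ Cg + ∑' n, |a n| := by
    intro x hx
    calc |g x - S x| ≤ |g x| + |S x| := abs_sub _ _
      _ ≤ Cg + ∑' n, |a n| := add_le_add (hCg x hx) (hSb x)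
  have hgm : AEStronglyMeasurable g (volume.restrict (Set.Ioc (-1:ℝ) 1)) :=
    (hg.continuousOn.mono Set.Ioc_subset_Icc_self).aestronglyMeasurable measurableSet_Ioc
  have hSc : Continuous S := by
    apply continuous_finset_sum
    exact fun n _ => continuous_const.mul (chebT_continuous n)
  have hhm : AEStronglyMeasurable (fun x => g x - S x)
      (volume.restrict (Set.Ioc (-1:ℝ) 1)) := hgm.sub hSc.aestronglyMeasurable.restrict
  have htail : ∀ x ∈ Set.Icc (-1:ℝ) 1,
      HasSum (fun k => a (k + (p+1)) * chebT (k + (p+1)) x) (g x - S x) := by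
    intro x hx
    refine (hasSum_nat_add_iff (f := fun n => a n * chebT n x) (p+1)).mpr ?_
    simpa [hSdef] using hexp x hx
  have hPar := key a p (fun x => g x - S x) (Cg + ∑' n, |a n|) hhm hMh habs1 htail
  set A : ℝ := ∫ x in (-1:ℝ)..1, (g x - S x)^2 * chebW x with hAdef
  have hSig : HasSum (fun k => (a (k + (p+1)))^2) (2/π * A) := by
    have h2 := hPar.mul_left (2/π)
    have h3 : (fun k => 2/π * (π/2 * (a (k + (p+1)))^2)) = fun k => (a (k + (p+1)))^2 := by
      funext k
      rw [← mul_assoc]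
      rw [show (2:ℝ)/π * (π/2) = 1 by field_simp]
      rw [one_mul]
    rwa [h3] at h2
  have hSignn : (0:ℝ) ≤ ∑' k : ℕ, (a (k+(p+1)))^2 := tsum_nonneg fun k => sq_nonneg _
  have hSigeq : ∑' k : ℕ, (a (k+(p+1)))^2 = 2/π * A := hSig.tsum_eq
  have hA_eq : A = π/2 * ∑' k : ℕ, (a (k+(p+1)))^2 := by
    rw [hSigeq, ← mul_assoc, show (π:ℝ)/2 * (2/π) = 1 by field_simp, one_mul]
  have hAnn : (0:ℝ) ≤ A := by
    rw [hA_eq]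
    have := pi_pos
    positivity
  have heq : π / Real.sqrt 2 * Real.sqrt (∑' n : ℕ, (a (n + p + 1)) ^ 2)
      = Real.sqrt π * Real.sqrt A := by
    have hid : (∑' n : ℕ, (a (n + p + 1)) ^ 2) = ∑' k : ℕ, (a (k+(p+1)))^2 := rfl
    rw [hid, hA_eq, Real.sqrt_mul (by positivity : (0:ℝ) ≤ π/2),
      Real.sqrt_div pi_pos.le]
    have h1 : Real.sqrt π * Real.sqrt π = π := Real.mul_self_sqrt pi_pos.le
    calc π / Real.sqrt 2 * Real.sqrt (∑' k : ℕ, (a (k+(p+1)))^2)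
        = (Real.sqrt π * Real.sqrt π) / Real.sqrt 2 * Real.sqrt (∑' k : ℕ, (a (k+(p+1)))^2) := by
          rw [h1]
      _ = Real.sqrt π * (Real.sqrt π / Real.sqrt 2 * Real.sqrt (∑' k : ℕ, (a (k+(p+1)))^2)) := by
          ring
  refine ⟨?_, heq⟩
  intro κ
  have hexpb : ∀ x : ℝ, ‖Complex.exp (Complex.I * κ * x)‖ = 1 := by
    intro x
    rw [
      show Complex.I * (κ:ℂ) * (x:ℂ) = ((κ * x : ℝ):ℂ) * Complex.I by push_cast; ring]
    exact Complex.norm_exp_ofReal_mul_I _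
  have hnorm : ∀ (f : ℝ → ℝ) (x : ℝ),
      ‖(f x : ℂ) * Complex.exp (Complex.I * κ * x) * (chebW x : ℂ)‖ = |f x| * chebW x := by
    intro f x
    rw [norm_mul, norm_mul, hexpb, Complex.norm_real, Complex.norm_real,
      Real.norm_eq_abs, Real.norm_eq_abs, abs_of_nonneg (chebW_nonneg x)]
    ring
  have hec : Continuous fun x : ℝ => Complex.exp (Complex.I * κ * x) :=
    Complex.continuous_exp.comp (continuous_const.mul Complex.continuous_ofReal)
  have hmc : ∀ (f : ℝ → ℝ), AEStronglyMeasurable f (volume.restrict (Set.Ioc (-1:ℝ) 1)) →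
      AEStronglyMeasurable
        (fun x => (f x : ℂ) * Complex.exp (Complex.I * κ * x) * (chebW x : ℂ))
        (volume.restrict (Set.Ioc (-1:ℝ) 1)) := by
    intro f hf
    exact ((Complex.continuous_ofReal.comp_aestronglyMeasurable hf).mul
      hec.aestronglyMeasurable.restrict).mul
      (Complex.continuous_ofReal.comp_aestronglyMeasurable
        chebW_measurable.aestronglyMeasurable.restrict)
  have hInt1 : IntervalIntegrable
      (fun x => (g x : ℂ) * Complex.exp (Complex.I * κ * x) * (chebW x : ℂ))
      volume (-1) 1 := by
    refine intInt_of_bound _ Cg (hmc g hgm) fun x hx => ?_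
    rw [hnorm]
    exact mul_le_mul_of_nonneg_right (hCg x (Set.Ioc_subset_Icc_self hx)) (chebW_nonneg x)
  have hInt2 : IntervalIntegrable
      (fun x => (S x : ℂ) * Complex.exp (Complex.I * κ * x) * (chebW x : ℂ))
      volume (-1) 1 := by
    refine intInt_of_bound _ (∑' n, |a n|) (hmc S hSc.aestronglyMeasurable.restrict)
      fun x hx => ?_
    rw [hnorm]
    exact mul_le_mul_of_nonneg_right (hSb x) (chebW_nonneg x)
  have hdiff : (∫ x in (-1:ℝ)..1, (g x : ℂ) * Complex.exp (Complex.I * κ * x) * (chebW x : ℂ))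
      - (∫ x in (-1:ℝ)..1, (S x : ℂ) * Complex.exp (Complex.I * κ * x) * (chebW x : ℂ))
      = ∫ x in (-1:ℝ)..1,
          ((g x - S x : ℝ) : ℂ) * Complex.exp (Complex.I * κ * x) * (chebW x : ℂ) := by
    rw [← intervalIntegral.integral_sub hInt1 hInt2]
    refine intervalIntegral.integral_congr fun x _ => ?_
    push_cast
    ring
  rw [hdiff]
  -- integrability of |h| w and h^2 w
  have habsInt : IntervalIntegrable (fun x => |g x - S x| * chebW x) volume (-1) 1 := by
    refine intInt_of_bound _ (Cg + ∑' n, |a n|) (hhm.norm.mul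
      chebW_measurable.aestronglyMeasurable.restrict) fun x hx => ?_
    rw [norm_mul, Real.norm_eq_abs, Real.norm_eq_abs, abs_abs,
      abs_of_nonneg (chebW_nonneg x)]
    exact mul_le_mul_of_nonneg_right (hMh x (Set.Ioc_subset_Icc_self hx)) (chebW_nonneg x)
  have hsqm : AEStronglyMeasurable (fun x => (g x - S x)^2)
      (volume.restrict (Set.Ioc (-1:ℝ) 1)) := by
    have := hhm.mul hhm
    refine this.congr (Filter.Eventually.of_forall fun x => ?_)
    exact (pow_two _).symm
  have hsqInt : IntervalIntegrable (fun x => (g x - S x)^2 * chebW x) volume (-1) 1 := by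
    refine intInt_of_bound _ ((Cg + ∑' n, |a n|)^2)
      (hsqm.mul chebW_measurable.aestronglyMeasurable.restrict) fun x hx => ?_
    rw [norm_mul, Real.norm_eq_abs, Real.norm_eq_abs, abs_of_nonneg (chebW_nonneg x),
      abs_of_nonneg (sq_nonneg _)]
    refine mul_le_mul_of_nonneg_right ?_ (chebW_nonneg x)
    have h1 := hMh x (Set.Ioc_subset_Icc_self hx)
    nlinarith [abs_nonneg (g x - S x), sq_abs (g x - S x)]
  set B : ℝ := ∫ x in (-1:ℝ)..1, |g x - S x| * chebW x with hBdef
  have hBle : ∀ t : ℝ, 0 < t → 2 * t * B ≤ t^2 * A + π := by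
    intro t ht
    have hpt : ∀ x ∈ Set.Icc (-1:ℝ) 1, 2 * t * (|g x - S x| * chebW x)
        ≤ t^2 * ((g x - S x)^2 * chebW x) + chebW x := by
      intro x hx
      have hy : (g x - S x)^2 = |g x - S x|^2 := (sq_abs _).symm
      rw [hy]
      nlinarith [mul_le_mul_of_nonneg_right
        (sq_nonneg (t * |g x - S x| - 1)) (chebW_nonneg x), chebW_nonneg x]
    calc 2 * t * B = ∫ x in (-1:ℝ)..1, 2 * t * (|g x - S x| * chebW x) := by
          rw [intervalIntegral.integral_const_mul]
      _ ≤ ∫ x in (-1:ℝ)..1, (t^2 * ((g x - S x)^2 * chebW x) + chebW x) := by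
          refine intervalIntegral.integral_mono_on hone (habsInt.const_mul _)
            ((hsqInt.const_mul _).add wInt) hpt
      _ = t^2 * A + π := by
          rw [intervalIntegral.integral_add (hsqInt.const_mul _) wInt,
            intervalIntegral.integral_const_mul, intW_eq, hAdef]
  have hCS : B ≤ Real.sqrt π * Real.sqrt A := by
    rcases eq_or_lt_of_le hAnn with hA0 | hA0
    · rw [← hA0, Real.sqrt_zero, mul_zero]
      by_contra hB
      push_neg at hB
      have h1 := hBle (π / B) (by positivity)
      rw [← hA0] at h1
      have h2 : (π / B) * B = π := div_mul_cancel₀ _ (ne_of_gt hB)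
      nlinarith [pi_pos]
    · have hsA : 0 < Real.sqrt A := Real.sqrt_pos.mpr hA0
      have hsP : 0 < Real.sqrt π := Real.sqrt_pos.mpr pi_pos
      have h1 := hBle (Real.sqrt π / Real.sqrt A) (by positivity)
      have hsq : (Real.sqrt π / Real.sqrt A)^2 * A = π := by
        rw [div_pow, Real.sq_sqrt pi_pos.le, Real.sq_sqrt hAnn]
        field_simp
      rw [hsq] at h1
      have h2 : B ≤ π / (Real.sqrt π / Real.sqrt A) := by
        rw [le_div_iff₀ (by positivity)]
        nlinarith
      calc B ≤ π / (Real.sqrt π / Real.sqrt A) := h2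
        _ = π / Real.sqrt π * Real.sqrt A := by
            rw [div_div_eq_mul_div, mul_div_right_comm]
        _ = Real.sqrt π * Real.sqrt A := by rw [Real.div_sqrt]
  calc ‖∫ x in (-1:ℝ)..1,
        ((g x - S x : ℝ) : ℂ) * Complex.exp (Complex.I * κ * x) * (chebW x : ℂ)‖
      ≤ ∫ x in (-1:ℝ)..1,
        ‖((g x - S x : ℝ) : ℂ) * Complex.exp (Complex.I * κ * x) * (chebW x : ℂ)‖ :=
        intervalIntegral.norm_integral_le_integral_norm hone
    _ = B := by
        rw [hBdef]
        exact intervalIntegral.integral_congr fun x _ => hnorm (fun y => g y - S y) x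
    _ ≤ Real.sqrt π * Real.sqrt A := hCS
    _ = π / Real.sqrt 2 * Real.sqrt (∑' n : ℕ, (a (n + p + 1)) ^ 2) := heq.symm
end

section
/- (Markov–Lukács) Let $p$ be an odd natural number and let $g$ be a real polynomial of degree at most $p$ with $g(x) \ge 0$ for all $x \in [-1,1]$. Then there exist real polynomials $f, h$ of degree at most $(p-1)/2$ such that $g(x) = (1+x) f(x)^2 + (1-x) h(x)^2$ for all $x$. -/
open Polynomial

section MarkovLukacsAux
open Set Filter


-- extension of nonnegativity over a removed point
lemma nonneg_extend (r : Polynomial ℝ) (t : ℝ)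
    (h : ∀ x ∈ Set.Icc (-1:ℝ) 1, x ≠ t → 0 ≤ r.eval x) :
    ∀ x ∈ Set.Icc (-1:ℝ) 1, 0 ≤ r.eval x := by
  intro x hx
  by_cases hxt : x = t
  · subst hxt
    rcases lt_or_eq_of_le hx.2 with hlt | heq
    · have hcont : ContinuousWithinAt (fun y => r.eval y) (Set.Ioi x) x :=
        (r.continuous).continuousAt.continuousWithinAt
      refine ge_of_tendsto hcont ?_
      have h1 : ∀ᶠ y in nhdsWithin x (Set.Ioi x), y < 1 :=
        eventually_nhdsWithin_of_eventually_nhds (eventually_lt_nhds hlt)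
      filter_upwards [h1, self_mem_nhdsWithin] with y hy1 hy2
      exact h y ⟨le_of_lt (lt_of_le_of_lt hx.1 hy2), hy1.le⟩ hy2.ne'
    · have hgt : (-1:ℝ) < x := by rw [heq]; norm_num
      have hcont : ContinuousWithinAt (fun y => r.eval y) (Set.Iio x) x :=
        (r.continuous).continuousAt.continuousWithinAt
      refine ge_of_tendsto hcont ?_
      have h1 : ∀ᶠ y in nhdsWithin x (Set.Iio x), -1 < y :=
        eventually_nhdsWithin_of_eventually_nhds (eventually_gt_nhds hgt)
      filter_upwards [h1, self_mem_nhdsWithin] with y hy1 hy2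
      exact h y ⟨hy1.le, le_of_lt (lt_of_lt_of_le hy2 hx.2)⟩ hy2.ne
  · exact h x hx hxt


lemma sq_dvd_of_interior_root (g : Polynomial ℝ)
    (hnn : ∀ x ∈ Set.Icc (-1:ℝ) 1, 0 ≤ g.eval x)
    (t : ℝ) (ht1 : -1 < t) (ht2 : t < 1) (hroot : g.IsRoot t) :
    (X - C t)^2 ∣ g := by
  have hmin : IsLocalMin (fun x => g.eval x) t := by
    have hev : ∀ᶠ x in nhds t, x ∈ Set.Ioo (-1:ℝ) 1 :=
      (isOpen_Ioo).eventually_mem ⟨ht1, ht2⟩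
    filter_upwards [hev] with y hy
    rw [hroot]
    exact hnn y ⟨hy.1.le, hy.2.le⟩
  have hderiv : g.derivative.eval t = 0 := by
    have := hmin.deriv_eq_zero
    rwa [Polynomial.deriv] at this
  obtain ⟨q, hq⟩ := dvd_iff_isRoot.2 hroot
  have hqroot : q.IsRoot t := by
    have hd : g.derivative = q + (X - C t) * q.derivative := by
      rw [hq, derivative_mul]
      simp
    have h2 := hderiv
    rw [hd] at h2
    simpa [IsRoot] using h2
  obtain ⟨r, hr⟩ := dvd_iff_isRoot.2 hqroot
  exact ⟨r, by rw [hq, hr]; ring⟩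

lemma exists_quadratic_factor (g : Polynomial ℝ) (hdeg : 1 ≤ g.natDegree)
    (hnr : ∀ t : ℝ, ¬ g.IsRoot t) :
    ∃ (u w : ℝ) (r : Polynomial ℝ), w ≠ 0 ∧ g = ((X - C u)^2 + C (w^2)) * r := by
  have hg0 : g ≠ 0 := by
    intro h; rw [h] at hdeg; simp at hdeg
  set φ := algebraMap ℝ ℂ with hφ
  have hdegm : 0 < (g.map φ).degree := by
    rw [degree_map]
    exact natDegree_pos_iff_degree_pos.mp (by omega)
  obtain ⟨z, hz⟩ := Complex.exists_root hdegm
  have hzim : z.im ≠ 0 := by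
    intro h0
    apply hnr z.re
    have hz' : (g.map φ).eval (φ z.re) = φ (g.eval z.re) := by
      rw [eval_map, eval₂_at_apply]
    have hzre : (φ z.re : ℂ) = z := by
      apply Complex.ext <;> simp [hφ, h0]
    rw [hzre, hz] at hz'
    have h2 : ((g.eval z.re : ℝ) : ℂ) = 0 := by
      rw [hφ, Complex.coe_algebraMap] at hz'
      exact hz'.symm
    exact_mod_cast h2
  set u := z.re
  set w := z.im
  set Q : Polynomial ℝ := (X - C u)^2 + C (w^2) with hQdef
  have hQeq : Q = X^2 + (C (-2*u) * X + C (u^2+w^2)) := by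
    simp only [hQdef, map_mul, map_add, map_neg, map_ofNat, map_pow]
    ring
  have hQmonic : Q.Monic := by
    rw [hQeq]
    exact monic_X_pow_add (n := 2) (lt_of_le_of_lt degree_linear_le (by norm_num))
  have hQdeg : Q.degree = 2 := by
    rw [hQeq]
    have h1 : (C (-2*u) * X + C (u^2+w^2) : Polynomial ℝ).degree < (X^2 : Polynomial ℝ).degree := by
      rw [degree_X_pow]
      exact lt_of_le_of_lt degree_linear_le (by norm_num)
    rw [degree_add_eq_left_of_degree_lt h1, degree_X_pow]
    norm_cast
  -- evaluate Q at z over ℂ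
  have hQz : (Q.map φ).eval z = 0 := by
    have h1 : z - (u:ℂ) = (w:ℂ) * Complex.I := by
      apply Complex.ext <;> simp [u, w]
    simp only [hQdef, Polynomial.map_add, Polynomial.map_pow, Polynomial.map_sub, map_X, map_C,
      eval_add, eval_pow, eval_sub, eval_X, eval_C]
    have : φ u = (u:ℂ) := rfl
    rw [this, h1]
    have : φ (w^2) = (w:ℂ)^2 := by push_cast [hφ]; rfl
    rw [this, mul_pow, Complex.I_sq]
    ring
  -- remainder
  set s := g %ₘ Q with hs
  have hsd : s.degree ≤ 1 := by
    have h1 : s.degree < Q.degree := degree_modByMonic_lt g hQmonic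
    rw [hQdeg] at h1
    by_cases hs0 : s = 0
    · rw [hs0]; simp
    · rw [degree_eq_natDegree hs0] at h1 ⊢
      exact_mod_cast Nat.lt_succ_iff.mp (by exact_mod_cast h1)
  have hdiv := modByMonic_add_div g Q
  have hsz : (s.map φ).eval z = 0 := by
    have := congrArg (fun p : Polynomial ℝ => (p.map φ).eval z) hdiv
    simp only [Polynomial.map_add, Polynomial.map_mul, eval_add, eval_mul] at this
    rw [hQz] at this
    rw [hz] at this
    simpa using this
  have hs0 : s = 0 := by
    have hrepr := eq_X_add_C_of_degree_le_one hsd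
    set a := s.coeff 1
    set b := s.coeff 0
    rw [hrepr] at hsz
    simp only [Polynomial.map_add, Polynomial.map_mul, map_C, map_X, eval_add, eval_mul,
      eval_C, eval_X] at hsz
    have him : a * w = 0 := by
      have := congrArg Complex.im hsz
      simpa [hφ] using this
    have ha : a = 0 := by
      rcases mul_eq_zero.mp him with h | h
      · exact h
      · exact absurd h hzim
    have hb : b = 0 := by
      rw [ha] at hsz
      simp [hφ] at hsz
      exact_mod_cast hsz
    rw [hrepr, ha, hb]; simp
  refine ⟨u, w, g /ₘ Q, hzim, ?_⟩
  have : Q * (g /ₘ Q) = g := by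
    conv_rhs => rw [← hdiv]
    rw [← hs, hs0, zero_add]
  exact this.symm


lemma quad_rep (u w : ℝ) : ∃ α β γ : ℝ,
    ∀ x : ℝ, (x - u)^2 + w^2 = (α*x + β)^2 + (1 - x^2)*γ^2 := by
  set c : ℝ := 1 + u^2 + w^2 with hc
  have hD : 0 ≤ c^2 - 4*u^2 := by nlinarith [sq_nonneg w, sq_nonneg (1 - u^2 + w^2)]
  set d : ℝ := Real.sqrt (c^2 - 4*u^2) with hd
  have hd2 : d^2 = c^2 - 4*u^2 := Real.sq_sqrt hD
  have hd0 : 0 ≤ d := Real.sqrt_nonneg _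
  set s : ℝ := (c + d)/2 with hs
  have hs1 : 1 ≤ s := by
    rw [hs]
    nlinarith [sq_nonneg w, sq_nonneg (2 - c - d), sq_nonneg (2 - c + d)]
  have hs0 : (0:ℝ) < s := lt_of_lt_of_le one_pos hs1
  have hkey : s^2 - c*s + u^2 = 0 := by
    have : 4*(s^2 - c*s + u^2) = d^2 - (c^2 - 4*u^2) := by rw [hs]; ring
    rw [hd2] at this
    linarith
  set α : ℝ := Real.sqrt s with hα
  have hα2 : α^2 = s := Real.sq_sqrt hs0.le
  have hα0 : α ≠ 0 := by
    rw [hα]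
    positivity
  set β : ℝ := -u/α with hβ
  set γ : ℝ := Real.sqrt (s - 1) with hγ
  have hγ2 : γ^2 = s - 1 := Real.sq_sqrt (by linarith)
  have h1 : α^2 - γ^2 = 1 := by rw [hα2, hγ2]; ring
  have h2 : α*β = -u := by rw [hβ]; field_simp
  have h3 : β^2 + γ^2 = u^2 + w^2 := by
    have hβ2 : β^2 = u^2/s := by
      rw [hβ, div_pow, neg_sq, hα2]
    rw [hβ2, hγ2]
    have hsne : s ≠ 0 := hs0.ne'
    field_simp
    nlinarith [hkey]
  clear_value c d s α β γ
  refine ⟨α, β, γ, fun x => ?_⟩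
  linear_combination -x^2*h1 - 2*x*h2 - h3


def EvenRep (n : ℕ) (g : Polynomial ℝ) : Prop :=
  ∃ A B : Polynomial ℝ,
    (∀ x : ℝ, g.eval x = (A.eval x)^2 + (1 - x^2) * (B.eval x)^2) ∧
    2 * A.natDegree ≤ n ∧ (B = 0 ∨ 2 * B.natDegree + 2 ≤ n)

def OddRep (n : ℕ) (g : Polynomial ℝ) : Prop :=
  ∃ f h : Polynomial ℝ,
    (∀ x : ℝ, g.eval x = (1 + x) * (f.eval x)^2 + (1 - x) * (h.eval x)^2) ∧
    2 * f.natDegree + 1 ≤ n ∧ 2 * h.natDegree + 1 ≤ n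

lemma natDegree_one_sub_X : ((1 : Polynomial ℝ) - X).natDegree ≤ 1 :=
  le_trans (natDegree_sub_le _ _) (by simp)

lemma natDegree_one_add_X : ((1 : Polynomial ℝ) + X).natDegree ≤ 1 :=
  le_trans (natDegree_add_le _ _) (by simp)

lemma natDegree_one_sub_X_sq : ((1 : Polynomial ℝ) - X^2).natDegree ≤ 2 :=
  le_trans (natDegree_sub_le _ _) (by simp [natDegree_pow])

lemma oddfac_mul_even {g r : Polynomial ℝ} {a b : ℝ} {n : ℕ}
    (hfac : ∀ x : ℝ, g.eval x = ((1+x)*a^2 + (1-x)*b^2) * r.eval x)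
    (hrep : EvenRep n r) : OddRep (n+1) g := by
  obtain ⟨A, B, hid, hA, hB⟩ := hrep
  rcases hB with hB0 | hB
  · refine ⟨C a * A, C b * A, fun x => ?_, ?_, ?_⟩
    · rw [hfac x, hid x, hB0]
      simp only [eval_mul, eval_C, eval_zero]
      ring
    · have := natDegree_C_mul_le a A; omega
    · have := natDegree_C_mul_le b A; omega
  · refine ⟨C a * A - (1 - X) * (C b * B), C b * A + (1 + X) * (C a * B), fun x => ?_, ?_, ?_⟩
    · rw [hfac x, hid x]
      simp only [eval_sub, eval_add, eval_mul, eval_C, eval_X, eval_one]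
      ring
    · have h1 := natDegree_C_mul_le a A
      have h2 : ((1 - X) * (C b * B)).natDegree ≤ 1 + B.natDegree :=
        le_trans natDegree_mul_le (add_le_add natDegree_one_sub_X (natDegree_C_mul_le b B))
      have h3 := natDegree_sub_le (C a * A) ((1 - X) * (C b * B))
      omega
    · have h1 := natDegree_C_mul_le b A
      have h2 : ((1 + X) * (C a * B)).natDegree ≤ 1 + B.natDegree :=
        le_trans natDegree_mul_le (add_le_add natDegree_one_add_X (natDegree_C_mul_le a B))
      have h3 := natDegree_add_le (C b * A) ((1 + X) * (C a * B))
      omega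

lemma oddfac_mul_odd {g r : Polynomial ℝ} {a b : ℝ} {n : ℕ}
    (hfac : ∀ x : ℝ, g.eval x = ((1+x)*a^2 + (1-x)*b^2) * r.eval x)
    (hrep : OddRep n r) : EvenRep (n+1) g := by
  obtain ⟨f, h, hid, hf, hh⟩ := hrep
  refine ⟨(1 + X) * (C a * f) - (1 - X) * (C b * h), C b * f + C a * h, fun x => ?_, ?_, ?_⟩
  · rw [hfac x, hid x]
    simp only [eval_sub, eval_add, eval_mul, eval_C, eval_X, eval_one]
    ring
  · have h1 : ((1 + X) * (C a * f)).natDegree ≤ 1 + f.natDegree :=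
      le_trans natDegree_mul_le (add_le_add natDegree_one_add_X (natDegree_C_mul_le a f))
    have h2 : ((1 - X) * (C b * h)).natDegree ≤ 1 + h.natDegree :=
      le_trans natDegree_mul_le (add_le_add natDegree_one_sub_X (natDegree_C_mul_le b h))
    have h3 := natDegree_sub_le ((1 + X) * (C a * f)) ((1 - X) * (C b * h))
    omega
  · right
    have h1 := natDegree_C_mul_le b f
    have h2 := natDegree_C_mul_le a h
    have h3 := natDegree_add_le (C b * f) (C a * h)
    omega

lemma evenfac_mul_even {g r : Polynomial ℝ} {α β γ : ℝ} {n : ℕ}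
    (hfac : ∀ x : ℝ, g.eval x = ((α*x+β)^2 + (1-x^2)*γ^2) * r.eval x)
    (hrep : EvenRep n r) : EvenRep (n+2) g := by
  obtain ⟨A, B, hid, hA, hB⟩ := hrep
  have hL : (C α * X + C β : Polynomial ℝ).natDegree ≤ 1 := by
    refine le_trans (natDegree_add_le _ _) ?_
    have h1 : (C α * X : Polynomial ℝ).natDegree ≤ 1 :=
      le_trans (natDegree_C_mul_le α X) (by simp)
    simp only [natDegree_C]
    omega
  set L : Polynomial ℝ := C α * X + C β with hLdef
  have hLev : ∀ x : ℝ, L.eval x = α * x + β := by intro x; simp [hLdef]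
  rcases hB with hB0 | hB
  · refine ⟨L * A, C γ * A, fun x => ?_, ?_, ?_⟩
    · rw [hfac x, hid x, hB0]
      simp only [eval_mul, eval_C, eval_zero, hLev]
      ring
    · have := natDegree_mul_le (p := L) (q := A)
      omega
    · right
      have := natDegree_C_mul_le γ A
      omega
  · refine ⟨L * A - (1 - X^2) * (C γ * B), L * B + C γ * A, fun x => ?_, ?_, ?_⟩
    · rw [hfac x, hid x]
      simp only [eval_sub, eval_add, eval_mul, eval_C, eval_X, eval_one, eval_pow, hLev]
      ring
    · have h1 : (L * A).natDegree ≤ 1 + A.natDegree :=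
        le_trans natDegree_mul_le (by omega)
      have h2 : ((1 - X^2) * (C γ * B)).natDegree ≤ 2 + B.natDegree :=
        le_trans natDegree_mul_le (add_le_add natDegree_one_sub_X_sq (natDegree_C_mul_le γ B))
      have h3 := natDegree_sub_le (L * A) ((1 - X^2) * (C γ * B))
      omega
    · right
      have h1 : (L * B).natDegree ≤ 1 + B.natDegree :=
        le_trans natDegree_mul_le (by omega)
      have h2 := natDegree_C_mul_le γ A
      have h3 := natDegree_add_le (L * B) (C γ * A)
      omega

lemma evenfac_mul_odd {g r : Polynomial ℝ} {α β γ : ℝ} {n : ℕ}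
    (hfac : ∀ x : ℝ, g.eval x = ((α*x+β)^2 + (1-x^2)*γ^2) * r.eval x)
    (hrep : OddRep n r) : OddRep (n+2) g := by
  obtain ⟨f, h, hid, hf, hh⟩ := hrep
  have hL : (C α * X + C β : Polynomial ℝ).natDegree ≤ 1 := by
    refine le_trans (natDegree_add_le _ _) ?_
    have h1 : (C α * X : Polynomial ℝ).natDegree ≤ 1 :=
      le_trans (natDegree_C_mul_le α X) (by simp)
    simp only [natDegree_C]
    omega
  set L : Polynomial ℝ := C α * X + C β with hLdef
  have hLev : ∀ x : ℝ, L.eval x = α * x + β := by intro x; simp [hLdef]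
  refine ⟨L * f - (1 - X) * (C γ * h), L * h + (1 + X) * (C γ * f), fun x => ?_, ?_, ?_⟩
  · rw [hfac x, hid x]
    simp only [eval_sub, eval_add, eval_mul, eval_C, eval_X, eval_one, hLev]
    ring
  · have h1 : (L * f).natDegree ≤ 1 + f.natDegree := le_trans natDegree_mul_le (by omega)
    have h2 : ((1 - X) * (C γ * h)).natDegree ≤ 1 + h.natDegree :=
      le_trans natDegree_mul_le (add_le_add natDegree_one_sub_X (natDegree_C_mul_le γ h))
    have h3 := natDegree_sub_le (L * f) ((1 - X) * (C γ * h))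
    omega
  · have h1 : (L * h).natDegree ≤ 1 + h.natDegree := le_trans natDegree_mul_le (by omega)
    have h2 : ((1 + X) * (C γ * f)).natDegree ≤ 1 + f.natDegree :=
      le_trans natDegree_mul_le (add_le_add natDegree_one_add_X (natDegree_C_mul_le γ f))
    have h3 := natDegree_add_le (L * h) ((1 + X) * (C γ * f))
    omega

lemma pow_pos_of_ne_zero_aux (x t : ℝ) (h : x ≠ t) : 0 < (x - t)^2 := by
  have : x - t ≠ 0 := sub_ne_zero.mpr h
  positivity

lemma nonneg_of_mul_nonneg_pos {s e : ℝ} (h1 : 0 ≤ s * e) (h2 : 0 < s) : 0 ≤ e := by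
  by_contra hcon
  push_neg at hcon
  nlinarith

lemma quad_natDegree (u w : ℝ) : ((X - C u)^2 + C (w^2) : Polynomial ℝ).natDegree = 2 := by
  have h1 : ((X - C u)^2 : Polynomial ℝ).degree = 2 := by
    rw [degree_pow, degree_X_sub_C]
    rfl
  have h2 : (C (w^2) : Polynomial ℝ).degree < ((X - C u)^2 : Polynomial ℝ).degree := by
    rw [h1]
    exact lt_of_le_of_lt degree_C_le (by norm_num)
  have h3 : ((X - C u)^2 + C (w^2) : Polynomial ℝ).degree = 2 := by
    rw [degree_add_eq_left_of_degree_lt h2, h1]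
  exact natDegree_eq_of_degree_eq_some h3

lemma main_rep : ∀ n : ℕ, ∀ g : Polynomial ℝ, g.natDegree ≤ n →
    (∀ x ∈ Set.Icc (-1:ℝ) 1, 0 ≤ g.eval x) →
    (n % 2 = 0 → EvenRep n g) ∧ (n % 2 = 1 → OddRep n g) := by
  intro n
  induction n using Nat.strong_induction_on with
  | _ n IH =>
  intro g hdeg hnn
  by_cases hg0 : g = 0
  · subst hg0
    constructor
    · intro _
      exact ⟨0, 0, fun x => by simp, by simp, Or.inl rfl⟩
    · intro hodd
      exact ⟨0, 0, fun x => by simp, by simp only [natDegree_zero]; omega,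
        by simp only [natDegree_zero]; omega⟩
  by_cases hdeg0 : g.natDegree = 0
  · obtain ⟨c, hc⟩ := natDegree_eq_zero.mp hdeg0
    have hc0 : 0 ≤ c := by
      have := hnn 0 (by norm_num)
      rw [← hc] at this
      simpa using this
    constructor
    · intro _
      refine ⟨C (Real.sqrt c), 0, fun x => ?_, by simp, Or.inl rfl⟩
      rw [← hc]
      simp [Real.sq_sqrt hc0]
    · intro hodd
      have hn1 : 1 ≤ n := by omega
      refine ⟨C (Real.sqrt (c/2)), C (Real.sqrt (c/2)), fun x => ?_, by simp; omega, by simp; omega⟩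
      rw [← hc]
      have hs : (Real.sqrt (c/2))^2 = c/2 := Real.sq_sqrt (by linarith)
      simp only [eval_C, hs]
      ring
  -- natDegree ≥ 1
  have hdeg1 : 1 ≤ g.natDegree := by omega
  have hn1 : 1 ≤ n := le_trans hdeg1 hdeg
  by_cases hroot : ∃ t, g.IsRoot t
  · obtain ⟨t, ht⟩ := hroot
    by_cases hti : -1 < t ∧ t < 1
    · -- interior root: double
      obtain ⟨r, hr⟩ := sq_dvd_of_interior_root g hnn t hti.1 hti.2 ht
      have hr0 : r ≠ 0 := fun h0 => hg0 (by rw [hr, h0, mul_zero])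
      have hXt : ((X : Polynomial ℝ) - C t)^2 ≠ 0 := pow_ne_zero _ (X_sub_C_ne_zero t)
      have hdegr : r.natDegree + 2 = g.natDegree := by
        rw [hr, natDegree_mul hXt hr0, natDegree_pow, natDegree_X_sub_C]
        ring
      have hgx : ∀ x : ℝ, g.eval x = (x - t)^2 * r.eval x := by
        intro x; rw [hr]; simp
      have hrnn : ∀ x ∈ Set.Icc (-1:ℝ) 1, 0 ≤ r.eval x := by
        apply nonneg_extend r t
        intro x hx hxt
        have h1 := hnn x hx
        rw [hgx x] at h1
        have h2 : 0 < (x - t)^2 := pow_pos_of_ne_zero_aux x t hxt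
        exact nonneg_of_mul_nonneg_pos h1 h2
      have hn2 : 2 ≤ n := by omega
      have hIH := IH (n-2) (by omega) r (by omega) hrnn
      constructor
      · intro hpar
        obtain ⟨A, B, hid, hA, hB⟩ := hIH.1 (by omega)
        refine ⟨(X - C t) * A, (X - C t) * B, fun x => ?_, ?_, ?_⟩
        · rw [hgx x, hid x]
          simp only [eval_mul, eval_sub, eval_X, eval_C]
          ring
        · have h1 : ((X - C t) * A).natDegree ≤ 1 + A.natDegree := by
            refine le_trans natDegree_mul_le ?_
            rw [natDegree_X_sub_C]
          omega
        · rcases hB with hB0 | hB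
          · left; rw [hB0, mul_zero]
          · right
            have h1 : ((X - C t) * B).natDegree ≤ 1 + B.natDegree := by
              refine le_trans natDegree_mul_le ?_
              rw [natDegree_X_sub_C]
            omega
      · intro hpar
        obtain ⟨f, h, hid, hf, hh⟩ := hIH.2 (by omega)
        refine ⟨(X - C t) * f, (X - C t) * h, fun x => ?_, ?_, ?_⟩
        · rw [hgx x, hid x]
          simp only [eval_mul, eval_sub, eval_X, eval_C]
          ring
        · have h1 : ((X - C t) * f).natDegree ≤ 1 + f.natDegree := by
            refine le_trans natDegree_mul_le ?_
            rw [natDegree_X_sub_C]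
          omega
        · have h1 : ((X - C t) * h).natDegree ≤ 1 + h.natDegree := by
            refine le_trans natDegree_mul_le ?_
            rw [natDegree_X_sub_C]
          omega
    · -- root outside (-1,1)
      obtain ⟨q, hq⟩ := dvd_iff_isRoot.2 ht
      have hq0 : q ≠ 0 := fun h0 => hg0 (by rw [hq, h0, mul_zero])
      have hdegq : q.natDegree + 1 = g.natDegree := by
        rw [hq, natDegree_mul (X_sub_C_ne_zero t) hq0, natDegree_X_sub_C]
        ring
      have htout : t ≤ -1 ∨ 1 ≤ t := by
        rcases not_and_or.mp hti with h1 | h2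
        · left; linarith [not_lt.mp h1]
        · right; linarith [not_lt.mp h2]
      rcases htout with htl | htr
      · -- t ≤ -1 : g = (X - t) * q, q ≥ 0 on Icc
        have hqnn : ∀ x ∈ Set.Icc (-1:ℝ) 1, 0 ≤ q.eval x := by
          apply nonneg_extend q t
          intro x hx hxt
          have h1 := hnn x hx
          rw [hq] at h1
          simp only [eval_mul, eval_sub, eval_X, eval_C] at h1
          have h2 : 0 < x - t := by
            rcases lt_or_eq_of_le (le_trans htl hx.1) with h | h
            · linarith
            · exact absurd h.symm hxt
          nlinarith
        set a : ℝ := Real.sqrt ((1-t)/2) with ha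
        set b : ℝ := Real.sqrt ((-1-t)/2) with hb
        have ha2 : a^2 = (1-t)/2 := Real.sq_sqrt (by linarith)
        have hb2 : b^2 = (-1-t)/2 := Real.sq_sqrt (by linarith)
        have hfac : ∀ x : ℝ, g.eval x = ((1+x)*a^2 + (1-x)*b^2) * q.eval x := by
          intro x
          rw [hq]
          simp only [eval_mul, eval_sub, eval_X, eval_C]
          rw [ha2, hb2]
          ring
        have hIH := IH (n-1) (by omega) q (by omega) hqnn
        constructor
        · intro hpar
          have hodd := hIH.2 (by omega)
          have := oddfac_mul_odd hfac hodd
          have hnn1 : n - 1 + 1 = n := by omega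
          rwa [hnn1] at this
        · intro hpar
          have heven := hIH.1 (by omega)
          have := oddfac_mul_even hfac heven
          have hnn1 : n - 1 + 1 = n := by omega
          rwa [hnn1] at this
      · -- 1 ≤ t : g = (t - X) * (-q)
        set r : Polynomial ℝ := -q with hrdef
        have hrnn : ∀ x ∈ Set.Icc (-1:ℝ) 1, 0 ≤ r.eval x := by
          apply nonneg_extend r t
          intro x hx hxt
          have h1 := hnn x hx
          rw [hq] at h1
          simp only [eval_mul, eval_sub, eval_X, eval_C] at h1
          have h2 : 0 < t - x := by
            rcases lt_or_eq_of_le (le_trans hx.2 htr) with h | h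
            · linarith
            · exact absurd h hxt
          simp only [hrdef, eval_neg]
          nlinarith
        set a : ℝ := Real.sqrt ((t-1)/2) with ha
        set b : ℝ := Real.sqrt ((t+1)/2) with hb
        have ha2 : a^2 = (t-1)/2 := Real.sq_sqrt (by linarith)
        have hb2 : b^2 = (t+1)/2 := Real.sq_sqrt (by linarith)
        have hfac : ∀ x : ℝ, g.eval x = ((1+x)*a^2 + (1-x)*b^2) * r.eval x := by
          intro x
          rw [hq]
          simp only [hrdef, eval_mul, eval_sub, eval_neg, eval_X, eval_C]
          rw [ha2, hb2]
          ring
        have hdegr : r.natDegree = q.natDegree := natDegree_neg q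
        have hIH := IH (n-1) (by omega) r (by omega) hrnn
        constructor
        · intro hpar
          have hodd := hIH.2 (by omega)
          have := oddfac_mul_odd hfac hodd
          have hnn1 : n - 1 + 1 = n := by omega
          rwa [hnn1] at this
        · intro hpar
          have heven := hIH.1 (by omega)
          have := oddfac_mul_even hfac heven
          have hnn1 : n - 1 + 1 = n := by omega
          rwa [hnn1] at this
  · -- no real root: quadratic factor
    push_neg at hroot
    obtain ⟨u, w, r, hw, hgr⟩ := exists_quadratic_factor g hdeg1 hroot
    have hr0 : r ≠ 0 := fun h0 => hg0 (by rw [hgr, h0, mul_zero])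
    have hQdeg : ((X - C u)^2 + C (w^2) : Polynomial ℝ).natDegree = 2 := quad_natDegree u w
    have hQ0 : ((X - C u)^2 + C (w^2) : Polynomial ℝ) ≠ 0 := by
      intro h0
      rw [h0] at hQdeg
      simp at hQdeg
    have hdegr : r.natDegree + 2 = g.natDegree := by
      rw [hgr, natDegree_mul hQ0 hr0, hQdeg]
      ring
    have hQpos : ∀ x : ℝ, 0 < ((X - C u)^2 + C (w^2) : Polynomial ℝ).eval x := by
      intro x
      simp only [eval_add, eval_pow, eval_sub, eval_X, eval_C]
      positivity
    have hrnn : ∀ x ∈ Set.Icc (-1:ℝ) 1, 0 ≤ r.eval x := by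
      intro x hx
      have h1 := hnn x hx
      rw [hgr] at h1
      simp only [eval_mul] at h1
      have h2 := hQpos x
      exact nonneg_of_mul_nonneg_pos h1 h2
    obtain ⟨α, β, γ, hqr⟩ := quad_rep u w
    have hfac : ∀ x : ℝ, g.eval x = ((α*x+β)^2 + (1-x^2)*γ^2) * r.eval x := by
      intro x
      rw [hgr]
      simp only [eval_mul, eval_add, eval_pow, eval_sub, eval_X, eval_C]
      rw [← hqr x]
    have hn2 : 2 ≤ n := by omega
    have hIH := IH (n-2) (by omega) r (by omega) hrnn
    constructor
    · intro hpar
      have heven := hIH.1 (by omega)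
      have := evenfac_mul_even hfac heven
      have hnn2 : n - 2 + 2 = n := by omega
      rwa [hnn2] at this
    · intro hpar
      have hodd := hIH.2 (by omega)
      have := evenfac_mul_odd hfac hodd
      have hnn2 : n - 2 + 2 = n := by omega
      rwa [hnn2] at this


end MarkovLukacsAux

/-- Markov–Lukács theorem: an odd-degree-bounded polynomial nonnegative on `[-1,1]`
is of the form `(1+x) f(x)² + (1-x) h(x)²` with `deg f, deg h ≤ (p-1)/2`. -/
theorem markov_lukacs (p : ℕ) (hp : Odd p) (g : Polynomial ℝ)
    (hdeg : g.natDegree ≤ p) (hnn : ∀ x ∈ Set.Icc (-1:ℝ) 1, 0 ≤ g.eval x) :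
    ∃ f h : Polynomial ℝ, f.natDegree ≤ (p - 1) / 2 ∧ h.natDegree ≤ (p - 1) / 2 ∧
      ∀ x : ℝ, g.eval x = (1 + x) * (f.eval x) ^ 2 + (1 - x) * (h.eval x) ^ 2 := by
  have hp2 : p % 2 = 1 := Nat.odd_iff.mp hp
  obtain ⟨f, h, hid, hf, hh⟩ := (main_rep p g hdeg hnn).2 hp2
  exact ⟨f, h, by omega, by omega, hid⟩
end

section
/- A real polynomial $g$ of degree at most $p$ (with $p$ odd) is nonnegative on $[-1,1]$ if and only if there exist positive semidefinite matrices $S_1, S_2 \in \mathbb{S}^{(p+1)/2}_+$ such that $g(x) = (1+x)\, T(x)^\top S_1 T(x) + (1-x)\, T(x)^\top S_2 T(x)$ for all $x$, where $T(x) := (T_0(x), \ldots, T_{(p-1)/2}(x))^\top$ is the vector of Chebyshev polynomials of the first kind of degrees up to $(p-1)/2$. -/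
open Polynomial

namespace ChebSDP

/-- Sums of squares of polynomials of `natDegree ≤ m`. -/
noncomputable def SOSle (m : ℕ) : AddSubmonoid (Polynomial ℝ) :=
  AddSubmonoid.closure {F | ∃ f : Polynomial ℝ, f.natDegree ≤ m ∧ F = f ^ 2}

/-- Sums of squares of polynomials of `natDegree < m`. -/
noncomputable def SOSlt (m : ℕ) : AddSubmonoid (Polynomial ℝ) :=
  AddSubmonoid.closure {F | ∃ f : Polynomial ℝ, f.natDegree < m ∧ F = f ^ 2}

lemma sq_mem_SOSle {m : ℕ} {f : Polynomial ℝ} (hf : f.natDegree ≤ m) : f ^ 2 ∈ SOSle m :=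
  AddSubmonoid.subset_closure ⟨f, hf, rfl⟩

lemma sq_mem_SOSlt {m : ℕ} {f : Polynomial ℝ} (hf : f.natDegree < m) : f ^ 2 ∈ SOSlt m :=
  AddSubmonoid.subset_closure ⟨f, hf, rfl⟩

lemma SOSle_mono {m m' : ℕ} (h : m ≤ m') : SOSle m ≤ SOSle m' :=
  AddSubmonoid.closure_mono (fun F ⟨f, hf, hF⟩ => ⟨f, hf.trans h, hF⟩)

lemma SOSlt_mono {m m' : ℕ} (h : m ≤ m') : SOSlt m ≤ SOSlt m' :=
  AddSubmonoid.closure_mono (fun F ⟨f, hf, hF⟩ => ⟨f, hf.trans_le h, hF⟩)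

lemma SOSlt_le_SOSle (m : ℕ) : SOSlt m ≤ SOSle m :=
  AddSubmonoid.closure_mono (fun F ⟨f, hf, hF⟩ => ⟨f, hf.le, hF⟩)

lemma SOSle_le_SOSlt (m : ℕ) : SOSle m ≤ SOSlt (m + 1) :=
  AddSubmonoid.closure_mono (fun F ⟨f, hf, hF⟩ => ⟨f, by omega, hF⟩)

lemma SOSlt_succ_le_SOSle (m : ℕ) : SOSlt (m + 1) ≤ SOSle m :=
  AddSubmonoid.closure_mono (fun F ⟨f, hf, hF⟩ => ⟨f, by omega, hF⟩)

lemma mul_sq_mem_SOSle {q : Polynomial ℝ} {k m : ℕ} (hq : q.natDegree ≤ k)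
    {F : Polynomial ℝ} (hF : F ∈ SOSle m) : q ^ 2 * F ∈ SOSle (k + m) := by
  induction hF using AddSubmonoid.closure_induction with
  | mem x hx =>
    obtain ⟨f, hf, rfl⟩ := hx
    rw [← mul_pow]
    exact sq_mem_SOSle ((natDegree_mul_le).trans (by omega))
  | zero => simpa using (SOSle (k + m)).zero_mem
  | add x y _ _ hx hy => rw [mul_add]; exact (SOSle (k + m)).add_mem hx hy

lemma mul_sq_mem_SOSlt {q : Polynomial ℝ} {k m : ℕ} (hq : q.natDegree ≤ k)
    {F : Polynomial ℝ} (hF : F ∈ SOSlt m) : q ^ 2 * F ∈ SOSlt (k + m) := by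
  induction hF using AddSubmonoid.closure_induction with
  | mem x hx =>
    obtain ⟨f, hf, rfl⟩ := hx
    rw [← mul_pow]
    exact sq_mem_SOSlt ((natDegree_mul_le).trans_lt (by omega))
  | zero => simpa using (SOSlt (k + m)).zero_mem
  | add x y _ _ hx hy => rw [mul_add]; exact (SOSlt (k + m)).add_mem hx hy

lemma const_mul_mem_SOSle {c : ℝ} (hc : 0 ≤ c) {m : ℕ} {F : Polynomial ℝ}
    (hF : F ∈ SOSle m) : C c * F ∈ SOSle m := by
  have : (C (Real.sqrt c)) ^ 2 * F ∈ SOSle (0 + m) :=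
    mul_sq_mem_SOSle (by simp) hF
  simpa [← map_pow, Real.sq_sqrt hc] using this

lemma const_mul_mem_SOSlt {c : ℝ} (hc : 0 ≤ c) {m : ℕ} {F : Polynomial ℝ}
    (hF : F ∈ SOSlt m) : C c * F ∈ SOSlt m := by
  have : (C (Real.sqrt c)) ^ 2 * F ∈ SOSlt (0 + m) :=
    mul_sq_mem_SOSlt (by simp) hF
  simpa [← map_pow, Real.sq_sqrt hc] using this

lemma one_mem_SOSle (m : ℕ) : (1 : Polynomial ℝ) ∈ SOSle m := by
  simpa using sq_mem_SOSle (m := m) (f := 1) (by simp)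

lemma const_mem_SOSle {c : ℝ} (hc : 0 ≤ c) (m : ℕ) : C c ∈ SOSle m := by
  simpa using const_mul_mem_SOSle hc (one_mem_SOSle m)


/-- `g = (1+X) F + (1-X) H` with `F, H` sums of squares of degree `≤ m`. -/
def OddRep (m : ℕ) (g : Polynomial ℝ) : Prop :=
  ∃ F H, F ∈ SOSle m ∧ H ∈ SOSle m ∧ g = (1 + X) * F + (1 - X) * H

/-- `q = F + (1-X²) H` with `F` (resp. `H`) sums of squares of degree `≤ m` (resp `< m`). -/
def EvenRep (m : ℕ) (q : Polynomial ℝ) : Prop :=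
  ∃ F H, F ∈ SOSle m ∧ H ∈ SOSlt m ∧ q = F + (1 - X ^ 2) * H

lemma OddRep.add {m : ℕ} {g g' : Polynomial ℝ} (h : OddRep m g) (h' : OddRep m g') :
    OddRep m (g + g') := by
  obtain ⟨F, H, hF, hH, rfl⟩ := h
  obtain ⟨F', H', hF', hH', rfl⟩ := h'
  exact ⟨F + F', H + H', (SOSle m).add_mem hF hF', (SOSle m).add_mem hH hH', by ring⟩

lemma EvenRep.add {m : ℕ} {g g' : Polynomial ℝ} (h : EvenRep m g) (h' : EvenRep m g') :
    EvenRep m (g + g') := by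
  obtain ⟨F, H, hF, hH, rfl⟩ := h
  obtain ⟨F', H', hF', hH', rfl⟩ := h'
  exact ⟨F + F', H + H', (SOSle m).add_mem hF hF', (SOSlt m).add_mem hH hH', by ring⟩

lemma OddRep.zero (m : ℕ) : OddRep m 0 :=
  ⟨0, 0, (SOSle m).zero_mem, (SOSle m).zero_mem, by ring⟩

lemma EvenRep.zero (m : ℕ) : EvenRep m 0 :=
  ⟨0, 0, (SOSle m).zero_mem, (SOSlt m).zero_mem, by ring⟩

lemma OddRep.const {c : ℝ} (hc : 0 ≤ c) (m : ℕ) : OddRep m (C c) := by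
  have h : (C (c/2) : Polynomial ℝ) * 2 = C c := by
    rw [show (2 : Polynomial ℝ) = C 2 from (map_ofNat C 2).symm, ← map_mul]
    norm_num
  exact ⟨C (c / 2), C (c / 2), const_mem_SOSle (by linarith) m, const_mem_SOSle (by linarith) m,
    by linear_combination -h⟩

lemma EvenRep.const {c : ℝ} (hc : 0 ≤ c) (m : ℕ) : EvenRep m (C c) :=
  ⟨C c, 0, const_mem_SOSle hc m, (SOSlt m).zero_mem, by ring⟩

lemma OddRep.const_mul {c : ℝ} (hc : 0 ≤ c) {m : ℕ} {g : Polynomial ℝ} (h : OddRep m g) :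
    OddRep m (C c * g) := by
  obtain ⟨F, H, hF, hH, rfl⟩ := h
  exact ⟨C c * F, C c * H, const_mul_mem_SOSle hc hF, const_mul_mem_SOSle hc hH, by ring⟩

lemma EvenRep.const_mul {c : ℝ} (hc : 0 ≤ c) {m : ℕ} {g : Polynomial ℝ} (h : EvenRep m g) :
    EvenRep m (C c * g) := by
  obtain ⟨F, H, hF, hH, rfl⟩ := h
  exact ⟨C c * F, C c * H, const_mul_mem_SOSle hc hF, const_mul_mem_SOSlt hc hH, by ring⟩

lemma OddRep.linSq_mul {q : Polynomial ℝ} (hq : q.natDegree ≤ 1) {m : ℕ} {g : Polynomial ℝ}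
    (h : OddRep m g) : OddRep (m + 1) (q ^ 2 * g) := by
  obtain ⟨F, H, hF, hH, rfl⟩ := h
  exact ⟨q ^ 2 * F, q ^ 2 * H,
    by simpa [Nat.add_comm] using mul_sq_mem_SOSle hq hF,
    by simpa [Nat.add_comm] using mul_sq_mem_SOSle hq hH, by ring⟩

lemma EvenRep.linSq_mul {q : Polynomial ℝ} (hq : q.natDegree ≤ 1) {m : ℕ} {g : Polynomial ℝ}
    (h : EvenRep m g) : EvenRep (m + 1) (q ^ 2 * g) := by
  obtain ⟨F, H, hF, hH, rfl⟩ := h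
  exact ⟨q ^ 2 * F, q ^ 2 * H,
    by simpa [Nat.add_comm] using mul_sq_mem_SOSle hq hF,
    by simpa [Nat.add_comm] using mul_sq_mem_SOSlt hq hH, by ring⟩

/-- Convert an even representation into an odd one at the same level. -/
lemma EvenRep.toOdd {m : ℕ} {q : Polynomial ℝ} (h : EvenRep m q) : OddRep m q := by
  obtain ⟨F, H, hF, hH, rfl⟩ := h
  refine ⟨C (1/2) * F + C (1/2) * ((1 - X) ^ 2 * H),
          C (1/2) * F + C (1/2) * ((1 + X) ^ 2 * H), ?_, ?_, ?_⟩
  · refine (SOSle m).add_mem (const_mul_mem_SOSle (by norm_num) hF)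
      (const_mul_mem_SOSle (by norm_num) ?_)
    have h1 : (1 - X : Polynomial ℝ).natDegree ≤ 1 := by
      simpa using natDegree_sub_le (1 : Polynomial ℝ) X
    have := mul_sq_mem_SOSlt h1 hH
    exact SOSlt_succ_le_SOSle _ (by simpa [Nat.add_comm] using this)
  · refine (SOSle m).add_mem (const_mul_mem_SOSle (by norm_num) hF)
      (const_mul_mem_SOSle (by norm_num) ?_)
    have h1 : (1 + X : Polynomial ℝ).natDegree ≤ 1 := by
      simpa using natDegree_add_le (1 : Polynomial ℝ) X
    have := mul_sq_mem_SOSlt h1 hH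
    exact SOSlt_succ_le_SOSle _ (by simpa [Nat.add_comm] using this)
  · have h : (C (1/2 : ℝ) : Polynomial ℝ) * 2 = 1 := by
      rw [show (2 : Polynomial ℝ) = C 2 from (map_ofNat C 2).symm, ← map_mul]
      norm_num
    linear_combination (-(F : Polynomial ℝ) - (1 - X ^ 2) * H) * h

/-- Convert an odd representation into an even one at the next level. -/
lemma OddRep.toEven {m : ℕ} {g : Polynomial ℝ} (h : OddRep m g) : EvenRep (m + 1) g := by
  obtain ⟨F, H, hF, hH, rfl⟩ := h
  have h1 : (1 + X : Polynomial ℝ).natDegree ≤ 1 := by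
    simpa using natDegree_add_le (1 : Polynomial ℝ) X
  have h2 : (1 - X : Polynomial ℝ).natDegree ≤ 1 := by
    simpa using natDegree_sub_le (1 : Polynomial ℝ) X
  refine ⟨C (1/2) * ((1 + X) ^ 2 * F) + C (1/2) * ((1 - X) ^ 2 * H),
          C (1/2) * F + C (1/2) * H, ?_, ?_, ?_⟩
  · exact (SOSle (m+1)).add_mem
      (const_mul_mem_SOSle (by norm_num) (by simpa [Nat.add_comm] using mul_sq_mem_SOSle h1 hF))
      (const_mul_mem_SOSle (by norm_num) (by simpa [Nat.add_comm] using mul_sq_mem_SOSle h2 hH))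
  · exact (SOSlt (m+1)).add_mem
      (const_mul_mem_SOSlt (by norm_num) (SOSle_le_SOSlt m hF))
      (const_mul_mem_SOSlt (by norm_num) (SOSle_le_SOSlt m hH))
  · have h : (C (1/2 : ℝ) : Polynomial ℝ) * 2 = 1 := by
      rw [show (2 : Polynomial ℝ) = C 2 from (map_ofNat C 2).symm, ← map_mul]
      norm_num
    linear_combination (-((1 + X) * F) - (1 - X) * H) * h

/-- Multiplying an odd representation by `(1 - X)`. -/
lemma OddRep.one_sub_mul {m : ℕ} {g : Polynomial ℝ} (h : OddRep m g) :
    EvenRep (m + 1) ((1 - X) * g) := by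
  obtain ⟨F, H, hF, hH, rfl⟩ := h
  have h2 : (1 - X : Polynomial ℝ).natDegree ≤ 1 := by
    simpa using natDegree_sub_le (1 : Polynomial ℝ) X
  refine ⟨(1 - X) ^ 2 * H, F, ?_, ?_, by ring⟩
  · simpa [Nat.add_comm] using mul_sq_mem_SOSle h2 hH
  · exact SOSle_le_SOSlt m hF

/-- Multiplying an odd representation by `(1 + X)`. -/
lemma OddRep.one_add_mul {m : ℕ} {g : Polynomial ℝ} (h : OddRep m g) :
    EvenRep (m + 1) ((1 + X) * g) := by
  obtain ⟨F, H, hF, hH, rfl⟩ := h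
  have h1 : (1 + X : Polynomial ℝ).natDegree ≤ 1 := by
    simpa using natDegree_add_le (1 : Polynomial ℝ) X
  refine ⟨(1 + X) ^ 2 * F, H, ?_, ?_, by ring⟩
  · simpa [Nat.add_comm] using mul_sq_mem_SOSle h1 hF
  · exact SOSle_le_SOSlt m hH

/-- Multiplying an even representation by `(1 - X)` keeps the level. -/
lemma EvenRep.one_sub_mul {m : ℕ} {q : Polynomial ℝ} (h : EvenRep m q) :
    OddRep m ((1 - X) * q) := by
  obtain ⟨F, H, hF, hH, rfl⟩ := h
  have h2 : (1 - X : Polynomial ℝ).natDegree ≤ 1 := by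
    simpa using natDegree_sub_le (1 : Polynomial ℝ) X
  refine ⟨(1 - X) ^ 2 * H, F, ?_, hF, by ring⟩
  exact SOSlt_succ_le_SOSle _ (by simpa [Nat.add_comm] using mul_sq_mem_SOSlt h2 hH)

/-- Multiplying an even representation by `(1 + X)` keeps the level. -/
lemma EvenRep.one_add_mul {m : ℕ} {q : Polynomial ℝ} (h : EvenRep m q) :
    OddRep m ((1 + X) * q) := by
  obtain ⟨F, H, hF, hH, rfl⟩ := h
  have h1 : (1 + X : Polynomial ℝ).natDegree ≤ 1 := by
    simpa using natDegree_add_le (1 : Polynomial ℝ) X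
  refine ⟨F, (1 + X) ^ 2 * H, hF, ?_, by ring⟩
  exact SOSlt_succ_le_SOSle _ (by simpa [Nat.add_comm] using mul_sq_mem_SOSlt h1 hH)

/-- Multiplying an even representation by a positive-definite quadratic. -/
lemma EvenRep.quad_mul (a b : ℝ) {m : ℕ} {q : Polynomial ℝ} (h : EvenRep m q) :
    EvenRep (m + 1) ((X ^ 2 - C (2 * a) * X + C (a ^ 2 + b ^ 2)) * q) := by
  obtain ⟨F, H, hF, hH, rfl⟩ := h
  have hxa : (X - C a : Polynomial ℝ).natDegree ≤ 1 := (natDegree_X_sub_C a).le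
  refine ⟨(X - C a) ^ 2 * F + C (b ^ 2) * F, (X - C a) ^ 2 * H + C (b ^ 2) * H, ?_, ?_, ?_⟩
  · exact (SOSle (m+1)).add_mem (by simpa [Nat.add_comm] using mul_sq_mem_SOSle hxa hF)
      (SOSle_mono (Nat.le_succ m) (const_mul_mem_SOSle (sq_nonneg b) hF))
  · exact (SOSlt (m+1)).add_mem (by simpa [Nat.add_comm] using mul_sq_mem_SOSlt hxa hH)
      (SOSlt_mono (Nat.le_succ m) (const_mul_mem_SOSlt (sq_nonneg b) hH))
  · have hC : (C (2 * a) : Polynomial ℝ) = 2 * C a := by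
      rw [map_mul, map_ofNat]
    have hC2 : (C (a ^ 2 + b ^ 2) : Polynomial ℝ) = C a ^ 2 + C b ^ 2 := by
      rw [map_add, map_pow, map_pow]
    have hC3 : (C (b ^ 2) : Polynomial ℝ) = C b ^ 2 := map_pow C b 2
    rw [hC, hC2, hC3]; ring


/-- A polynomial nonnegative on a set is nonnegative on its closure. -/
lemma eval_nonneg_closure {h : Polynomial ℝ} {s : Set ℝ} (hs : ∀ x ∈ s, 0 ≤ h.eval x)
    {r : ℝ} (hr : r ∈ closure s) : 0 ≤ h.eval r := by
  have hc : ContinuousWithinAt (fun x => h.eval x) s r := (h.continuous).continuousWithinAt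
  have h1 : h.eval r ∈ closure ((fun x => h.eval x) '' s) := hc.mem_closure_image hr
  have h2 : closure ((fun x => h.eval x) '' s) ⊆ Set.Ici 0 := by
    rw [show Set.Ici (0:ℝ) = closure (Set.Ici 0) from isClosed_Ici.closure_eq.symm]
    exact closure_mono (by rintro _ ⟨x, hx, rfl⟩; exact hs x hx)
  exact h2 h1

lemma exists_root_odd_aux {g : Polynomial ℝ} (hodd : Odd g.natDegree)
    (hlc : 0 < g.leadingCoeff) : ∃ r, g.IsRoot r := by
  have hg0 : g ≠ 0 := fun h => by simp [h] at hlc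
  have hdeg : 0 < g.degree := natDegree_pos_iff_degree_pos.1 (hodd.pos)
  have htop : Filter.Tendsto (fun x => eval x g) Filter.atTop Filter.atTop :=
    g.tendsto_atTop_of_leadingCoeff_nonneg hdeg hlc.le
  -- behavior at -∞ via composition with -X
  set P : Polynomial ℝ := g.comp (-X) with hP
  have hPdeg : P.natDegree = g.natDegree := by
    rw [hP, natDegree_comp]; simp
  have hPlc : P.leadingCoeff = -g.leadingCoeff := by
    rw [hP, leadingCoeff_comp (by simp)]
    simp [hodd.neg_one_pow]
  have hPdeg' : 0 < P.degree := by
    apply natDegree_pos_iff_degree_pos.1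
    rw [hPdeg]
    exact hodd.pos
  have hbot : Filter.Tendsto (fun x => eval x P) Filter.atTop Filter.atBot :=
    P.tendsto_atBot_of_leadingCoeff_nonpos hPdeg' (by rw [hPlc]; linarith)
  obtain ⟨a, ha⟩ := (hbot.eventually (Filter.eventually_le_atBot (-1 : ℝ))).exists
  obtain ⟨b, hb⟩ := (htop.eventually (Filter.eventually_ge_atTop (1 : ℝ))).exists
  have ha' : eval (-a) g ≤ -1 := by
    rwa [hP, eval_comp, eval_neg, eval_X] at ha
  have hmem : (0:ℝ) ∈ Set.uIcc (eval (-a) g) (eval b g) :=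
    Set.mem_uIcc.2 (Or.inl ⟨by linarith, by linarith⟩)
  obtain ⟨r, _, hr⟩ := intermediate_value_uIcc (g.continuous.continuousOn) hmem
  exact ⟨r, hr⟩

lemma exists_root_odd {g : Polynomial ℝ} (hodd : Odd g.natDegree) : ∃ r, g.IsRoot r := by
  have hg0 : g ≠ 0 := fun h => by
    rw [h] at hodd
    simp at hodd
  rcases lt_trichotomy 0 g.leadingCoeff with h | h | h
  · exact exists_root_odd_aux hodd h
  · exact absurd h.symm (leadingCoeff_ne_zero.2 hg0)
  · obtain ⟨r, hr⟩ := exists_root_odd_aux (g := -g) (by simpa using hodd)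
      (by rw [leadingCoeff_neg]; linarith)
    exact ⟨r, by simpa using hr⟩

/-- An interior root of a polynomial nonnegative on `[-1,1]` is at least a double root. -/
lemma sq_dvd_of_interior_root {g : Polynomial ℝ}
    (hnn : ∀ x ∈ Set.Icc (-1:ℝ) 1, 0 ≤ g.eval x) {r : ℝ} (hr1 : -1 < r) (hr2 : r < 1)
    (hroot : g.IsRoot r) : (X - C r) ^ 2 ∣ g := by
  have hmin : IsLocalMin (fun x => eval x g) r := by
    filter_upwards [isOpen_Ioo.mem_nhds (show r ∈ Set.Ioo (-1:ℝ) 1 from ⟨hr1, hr2⟩)] with x hx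
    rw [show eval r g = 0 from hroot]
    exact hnn x (Set.Ioo_subset_Icc_self hx)
  have hderiv : eval r (derivative g) = 0 := by
    rw [← Polynomial.deriv]; exact hmin.deriv_eq_zero
  obtain ⟨q, hq⟩ := dvd_iff_isRoot.2 hroot
  have hqr : q.IsRoot r := by
    have : derivative g = q + (X - C r) * derivative q := by
      rw [hq, derivative_mul, derivative_X_sub_C]; ring
    have := congrArg (eval r) this
    rw [hderiv] at this
    simpa using this.symm
  obtain ⟨q₁, hq₁⟩ := dvd_iff_isRoot.2 hqr
  exact ⟨q₁, by rw [hq, hq₁]; ring⟩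

/-- A real polynomial with no real root and positive degree has a
positive-definite quadratic factor. -/
lemma quad_factor_of_no_root {g : Polynomial ℝ} (hg0 : g ≠ 0) (hdeg : 0 < g.natDegree)
    (hnoroot : ∀ r : ℝ, ¬ g.IsRoot r) :
    ∃ a b : ℝ, b ≠ 0 ∧ (X ^ 2 - C (2 * a) * X + C (a ^ 2 + b ^ 2)) ∣ g := by
  have hmapdeg : 0 < (g.map (algebraMap ℝ ℂ)).degree := by
    rw [degree_map_eq_of_injective (algebraMap ℝ ℂ).injective]
    exact natDegree_pos_iff_degree_pos.1 hdeg
  obtain ⟨z, hz⟩ := Complex.exists_root hmapdeg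
  have haeval : aeval z g = 0 := by
    rwa [aeval_def, ← eval_map]
  have him : z.im ≠ 0 := by
    intro h0
    apply hnoroot z.re
    have : aeval ((algebraMap ℝ ℂ) z.re) g = 0 := by
      rwa [show (algebraMap ℝ ℂ) z.re = z from Complex.ext rfl (by simp [h0])]
    rw [aeval_algebraMap_apply] at this
    have h2 : ((aeval z.re g : ℝ) : ℂ) = 0 := this
    have h3 : (aeval z.re) g = 0 := by exact_mod_cast h2
    rw [aeval_def, eval₂_eq_eval_map, show algebraMap ℝ ℝ = RingHom.id ℝ from rfl,
      Polynomial.map_id] at h3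
    exact h3
  refine ⟨z.re, z.im, him, ?_⟩
  have := g.quadratic_dvd_of_aeval_eq_zero_im_ne_zero haeval him
  rwa [show ‖z‖ ^ 2 = z.re ^ 2 + z.im ^ 2 from by
    rw [Complex.sq_norm, Complex.normSq_apply]; ring] at this


section Factor

variable {g : Polynomial ℝ} (hnn : ∀ x ∈ Set.Icc (-1:ℝ) 1, 0 ≤ g.eval x) (hg0 : g ≠ 0)

include hnn hg0

lemma factor_interior {r : ℝ} (hr1 : -1 < r) (hr2 : r < 1) (hroot : g.IsRoot r) :
    ∃ q : Polynomial ℝ, g = (X - C r) ^ 2 * q ∧ q.natDegree + 2 = g.natDegree ∧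
      ∀ x ∈ Set.Icc (-1:ℝ) 1, 0 ≤ q.eval x := by
  obtain ⟨q, hq⟩ := sq_dvd_of_interior_root hnn hr1 hr2 hroot
  have hq0 : q ≠ 0 := fun h => hg0 (by rw [hq, h, mul_zero])
  have hmon : ((X - C r) ^ 2 : Polynomial ℝ) ≠ 0 := ((monic_X_sub_C r).pow 2).ne_zero
  have hdeg : q.natDegree + 2 = g.natDegree := by
    rw [hq, natDegree_mul hmon hq0, natDegree_pow, natDegree_X_sub_C]
    ring
  have key : ∀ x ∈ Set.Icc (-1:ℝ) 1, x ≠ r → 0 ≤ q.eval x := by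
    intro x hx hxr
    have h1 : 0 < ((X - C r) ^ 2 : Polynomial ℝ).eval x := by
      rw [eval_pow, eval_sub, eval_X, eval_C]
      have : x - r ≠ 0 := sub_ne_zero.2 hxr
      positivity
    have h2 : 0 ≤ ((X - C r) ^ 2 : Polynomial ℝ).eval x * q.eval x := by
      rw [← eval_mul, ← hq]; exact hnn x hx
    exact (mul_nonneg_iff_of_pos_left h1).1 h2
  refine ⟨q, hq, hdeg, ?_⟩
  intro x hx
  by_cases hxr : x = r
  · subst hxr
    apply eval_nonneg_closure (s := Set.Ioo x 1)
    · intro y hy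
      exact key y ⟨by linarith [hy.1, hx.1, hy.2], hy.2.le⟩ (ne_of_gt hy.1)
    · rw [closure_Ioo (ne_of_lt hr2)]
      exact ⟨le_rfl, hr2.le⟩
  · exact key x hx hxr

lemma factor_one (hroot : g.IsRoot 1) :
    ∃ q : Polynomial ℝ, g = (1 - X) * q ∧ q.natDegree + 1 = g.natDegree ∧
      ∀ x ∈ Set.Icc (-1:ℝ) 1, 0 ≤ q.eval x := by
  obtain ⟨q₀, hq₀⟩ := dvd_iff_isRoot.2 hroot
  refine ⟨-q₀, by rw [hq₀, map_one]; ring, ?_, ?_⟩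
  · have hq0 : q₀ ≠ 0 := fun h => hg0 (by rw [hq₀, h, mul_zero])
    rw [natDegree_neg, hq₀, natDegree_mul (X_sub_C_ne_zero 1) hq0, natDegree_X_sub_C]
    ring
  · have key : ∀ x ∈ Set.Ico (-1:ℝ) 1, 0 ≤ (-q₀).eval x := by
      intro x hx
      have h1 : (0:ℝ) < (1 - X : Polynomial ℝ).eval x := by
        rw [eval_sub, eval_one, eval_X]; linarith [hx.2]
      have h2 : 0 ≤ (1 - X : Polynomial ℝ).eval x * (-q₀).eval x := by
        rw [← eval_mul, show (1 - X) * (-q₀) = g by rw [hq₀, map_one]; ring]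
        exact hnn x ⟨hx.1, hx.2.le⟩
      exact (mul_nonneg_iff_of_pos_left h1).1 h2
    intro x hx
    rcases lt_or_eq_of_le hx.2 with h | h
    · exact key x ⟨hx.1, h⟩
    · subst h
      apply eval_nonneg_closure (s := Set.Ico (-1:ℝ) 1) key
      rw [closure_Ico (by norm_num : (-1:ℝ) ≠ 1)]
      exact ⟨by norm_num, le_rfl⟩

lemma factor_neg_one (hroot : g.IsRoot (-1)) :
    ∃ q : Polynomial ℝ, g = (1 + X) * q ∧ q.natDegree + 1 = g.natDegree ∧
      ∀ x ∈ Set.Icc (-1:ℝ) 1, 0 ≤ q.eval x := by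
  obtain ⟨q₀, hq₀⟩ := dvd_iff_isRoot.2 hroot
  have heq : g = (1 + X) * q₀ := by rw [hq₀, map_neg, map_one]; ring
  refine ⟨q₀, heq, ?_, ?_⟩
  · have hq0 : q₀ ≠ 0 := fun h => hg0 (by rw [hq₀, h, mul_zero])
    rw [hq₀, natDegree_mul (X_sub_C_ne_zero (-1)) hq0, natDegree_X_sub_C]
    ring
  · have key : ∀ x ∈ Set.Ioc (-1:ℝ) 1, 0 ≤ q₀.eval x := by
      intro x hx
      have h1 : (0:ℝ) < (1 + X : Polynomial ℝ).eval x := by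
        rw [eval_add, eval_one, eval_X]; linarith [hx.1]
      have h2 : 0 ≤ (1 + X : Polynomial ℝ).eval x * q₀.eval x := by
        rw [← eval_mul, ← heq]
        exact hnn x ⟨hx.1.le, hx.2⟩
      exact (mul_nonneg_iff_of_pos_left h1).1 h2
    intro x hx
    rcases lt_or_eq_of_le hx.1 with h | h
    · exact key x ⟨h, hx.2⟩
    · rw [← h]
      apply eval_nonneg_closure (s := Set.Ioc (-1:ℝ) 1) key
      rw [closure_Ioc (by norm_num : (-1:ℝ) ≠ 1)]
      exact ⟨le_rfl, by norm_num⟩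

lemma factor_gt {r : ℝ} (hr : 1 < r) (hroot : g.IsRoot r) :
    ∃ q : Polynomial ℝ, g = (C r - X) * q ∧ q.natDegree + 1 = g.natDegree ∧
      ∀ x ∈ Set.Icc (-1:ℝ) 1, 0 ≤ q.eval x := by
  obtain ⟨q₀, hq₀⟩ := dvd_iff_isRoot.2 hroot
  have heq : g = (C r - X) * (-q₀) := by rw [hq₀]; ring
  refine ⟨-q₀, heq, ?_, ?_⟩
  · have hq0 : q₀ ≠ 0 := fun h => hg0 (by rw [hq₀, h, mul_zero])
    rw [natDegree_neg, hq₀, natDegree_mul (X_sub_C_ne_zero r) hq0, natDegree_X_sub_C]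
    ring
  · intro x hx
    have h1 : (0:ℝ) < (C r - X : Polynomial ℝ).eval x := by
      rw [eval_sub, eval_C, eval_X]; linarith [hx.2]
    have h2 : 0 ≤ (C r - X : Polynomial ℝ).eval x * (-q₀).eval x := by
      rw [← eval_mul, ← heq]; exact hnn x hx
    exact (mul_nonneg_iff_of_pos_left h1).1 h2

lemma factor_lt {r : ℝ} (hr : r < -1) (hroot : g.IsRoot r) :
    ∃ q : Polynomial ℝ, g = (X - C r) * q ∧ q.natDegree + 1 = g.natDegree ∧
      ∀ x ∈ Set.Icc (-1:ℝ) 1, 0 ≤ q.eval x := by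
  obtain ⟨q₀, hq₀⟩ := dvd_iff_isRoot.2 hroot
  refine ⟨q₀, hq₀, ?_, ?_⟩
  · have hq0 : q₀ ≠ 0 := fun h => hg0 (by rw [hq₀, h, mul_zero])
    rw [hq₀, natDegree_mul (X_sub_C_ne_zero r) hq0, natDegree_X_sub_C]
    ring
  · intro x hx
    have h1 : (0:ℝ) < (X - C r : Polynomial ℝ).eval x := by
      rw [eval_sub, eval_C, eval_X]; linarith [hx.1]
    have h2 : 0 ≤ (X - C r : Polynomial ℝ).eval x * q₀.eval x := by
      rw [← eval_mul, ← hq₀]; exact hnn x hx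
    exact (mul_nonneg_iff_of_pos_left h1).1 h2

lemma factor_quad (hdeg : 0 < g.natDegree) (hnoroot : ∀ r : ℝ, ¬ g.IsRoot r) :
    ∃ (a b : ℝ) (q : Polynomial ℝ), g = (X ^ 2 - C (2 * a) * X + C (a ^ 2 + b ^ 2)) * q ∧
      q.natDegree + 2 = g.natDegree ∧ ∀ x ∈ Set.Icc (-1:ℝ) 1, 0 ≤ q.eval x := by
  obtain ⟨a, b, hb, q, hq⟩ := quad_factor_of_no_root hg0 hdeg hnoroot
  set Q : Polynomial ℝ := X ^ 2 - C (2 * a) * X + C (a ^ 2 + b ^ 2) with hQ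
  have hQdeg : Q.natDegree = 2 := by
    rw [hQ]; compute_degree!
  have hQpos : ∀ x : ℝ, 0 < Q.eval x := by
    intro x
    rw [hQ]
    simp only [eval_add, eval_sub, eval_pow, eval_mul, eval_X, eval_C]
    have hb2 : 0 < b ^ 2 := by positivity
    nlinarith [sq_nonneg (x - a)]
  have hQ0 : Q ≠ 0 := fun h => by simpa [h] using hQdeg
  have hq0 : q ≠ 0 := fun h => hg0 (by rw [hq, h, mul_zero])
  refine ⟨a, b, q, hq, ?_, ?_⟩
  · rw [hq, natDegree_mul hQ0 hq0, hQdeg]; ring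
  · intro x hx
    have h2 : 0 ≤ Q.eval x * q.eval x := by rw [← eval_mul, ← hq]; exact hnn x hx
    exact (mul_nonneg_iff_of_pos_left (hQpos x)).1 h2

end Factor


theorem main_rep : ∀ n : ℕ, ∀ g : Polynomial ℝ, g.natDegree ≤ n →
    (∀ x ∈ Set.Icc (-1:ℝ) 1, 0 ≤ g.eval x) →
    (∀ m, g.natDegree ≤ 2 * m → EvenRep m g) ∧
    (∀ m, g.natDegree ≤ 2 * m + 1 → OddRep m g) := by
  intro n
  induction n using Nat.strong_induction_on with
  | _ n IH =>
  intro g hdeg hnn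
  by_cases hg0 : g = 0
  · subst hg0
    exact ⟨fun m _ => EvenRep.zero m, fun m _ => OddRep.zero m⟩
  have heven : ∀ m, g.natDegree ≤ 2 * m → EvenRep m g := by
    intro m hm
    by_cases hd0 : g.natDegree = 0
    · have hc : 0 ≤ g.coeff 0 := by
        rw [coeff_zero_eq_eval_zero]
        exact hnn 0 (by norm_num)
      rw [eq_C_of_natDegree_le_zero hd0.le]
      exact EvenRep.const hc m
    have hd1 : 1 ≤ g.natDegree := Nat.pos_of_ne_zero hd0
    obtain ⟨m', rfl⟩ : ∃ m', m = m' + 1 := ⟨m - 1, by omega⟩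
    by_cases hroot : ∃ r : ℝ, g.IsRoot r
    · obtain ⟨r, hr⟩ := hroot
      rcases lt_trichotomy r 1 with h1 | h1 | h1
      · rcases lt_trichotomy r (-1) with h2 | h2 | h2
        · -- r < -1
          obtain ⟨q, hfac, hdq, hqnn⟩ := factor_lt hnn hg0 h2 hr
          have hodd : OddRep m' q :=
            (IH q.natDegree (by omega) q le_rfl hqnn).2 m' (by omega)
          have heq : g = (1 + X) * q + C (-1 - r) * q := by
            rw [hfac, show (C r : Polynomial ℝ) = C (-1 - r) * (-1) + 1 + (-2) by
              rw [map_sub, map_neg, map_one]; push_cast; ring]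
            push_cast
            ring
          rw [heq]
          exact (hodd.one_add_mul).add ((hodd.const_mul (by linarith)).toEven)
        · -- r = -1
          subst h2
          obtain ⟨q, hfac, hdq, hqnn⟩ := factor_neg_one hnn hg0 hr
          have hodd : OddRep m' q :=
            (IH q.natDegree (by omega) q le_rfl hqnn).2 m' (by omega)
          rw [hfac]
          exact hodd.one_add_mul
        · -- -1 < r < 1
          obtain ⟨q, hfac, hdq, hqnn⟩ := factor_interior hnn hg0 h2 h1 hr
          have hev : EvenRep m' q :=
            (IH q.natDegree (by omega) q le_rfl hqnn).1 m' (by omega)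
          rw [hfac]
          exact hev.linSq_mul (natDegree_X_sub_C r).le
      · -- r = 1
        subst h1
        obtain ⟨q, hfac, hdq, hqnn⟩ := factor_one hnn hg0 hr
        have hodd : OddRep m' q :=
          (IH q.natDegree (by omega) q le_rfl hqnn).2 m' (by omega)
        rw [hfac]
        exact hodd.one_sub_mul
      · -- r > 1
        obtain ⟨q, hfac, hdq, hqnn⟩ := factor_gt hnn hg0 h1 hr
        have hodd : OddRep m' q :=
          (IH q.natDegree (by omega) q le_rfl hqnn).2 m' (by omega)
        have heq : g = C (r - 1) * q + (1 - X) * q := by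
          rw [hfac, show (C r : Polynomial ℝ) = C (r - 1) + 1 by
            rw [map_sub, map_one]; ring]
          ring
        rw [heq]
        exact ((hodd.const_mul (by linarith)).toEven).add (hodd.one_sub_mul)
    · push_neg at hroot
      obtain ⟨a, b, q, hfac, hdq, hqnn⟩ := factor_quad hnn hg0 hd1 hroot
      have hev : EvenRep m' q :=
        (IH q.natDegree (by omega) q le_rfl hqnn).1 m' (by omega)
      rw [hfac]
      exact hev.quad_mul a b
  refine ⟨heven, ?_⟩
  intro m hm
  by_cases hdm : g.natDegree ≤ 2 * m
  · exact (heven m hdm).toOdd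
  · have hd : g.natDegree = 2 * m + 1 := by omega
    have hodd : Odd g.natDegree := by rw [hd]; exact ⟨m, by ring⟩
    obtain ⟨r, hr⟩ := exists_root_odd hodd
    rcases lt_trichotomy r 1 with h1 | h1 | h1
    · rcases lt_trichotomy r (-1) with h2 | h2 | h2
      · -- r < -1
        obtain ⟨q, hfac, hdq, hqnn⟩ := factor_lt hnn hg0 h2 hr
        have hev : EvenRep m q :=
          (IH q.natDegree (by omega) q le_rfl hqnn).1 m (by omega)
        have heq : g = (1 + X) * q + C (-1 - r) * q := by
          rw [hfac, show (C r : Polynomial ℝ) = C (-1 - r) * (-1) + 1 + (-2) by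
            rw [map_sub, map_neg, map_one]; push_cast; ring]
          push_cast
          ring
        rw [heq]
        exact (hev.one_add_mul).add ((hev.const_mul (by linarith)).toOdd)
      · -- r = -1
        subst h2
        obtain ⟨q, hfac, hdq, hqnn⟩ := factor_neg_one hnn hg0 hr
        have hev : EvenRep m q :=
          (IH q.natDegree (by omega) q le_rfl hqnn).1 m (by omega)
        rw [hfac]
        exact hev.one_add_mul
      · -- -1 < r < 1
        obtain ⟨q, hfac, hdq, hqnn⟩ := factor_interior hnn hg0 h2 h1 hr
        obtain ⟨m', rfl⟩ : ∃ m', m = m' + 1 := ⟨m - 1, by omega⟩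
        have hoddq : OddRep m' q :=
          (IH q.natDegree (by omega) q le_rfl hqnn).2 m' (by omega)
        rw [hfac]
        exact hoddq.linSq_mul (natDegree_X_sub_C r).le
    · -- r = 1
      subst h1
      obtain ⟨q, hfac, hdq, hqnn⟩ := factor_one hnn hg0 hr
      have hev : EvenRep m q :=
        (IH q.natDegree (by omega) q le_rfl hqnn).1 m (by omega)
      rw [hfac]
      exact hev.one_sub_mul
    · -- r > 1
      obtain ⟨q, hfac, hdq, hqnn⟩ := factor_gt hnn hg0 h1 hr
      have hev : EvenRep m q :=
        (IH q.natDegree (by omega) q le_rfl hqnn).1 m (by omega)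
      have heq : g = C (r - 1) * q + (1 - X) * q := by
        rw [hfac, show (C r : Polynomial ℝ) = C (r - 1) + 1 by
          rw [map_sub, map_one]; ring]
        ring
      rw [heq]
      exact ((hev.const_mul (by linarith)).toOdd).add (hev.one_sub_mul)

/-- Markov–Lukács: a polynomial of odd degree `≤ 2m+1` nonnegative on `[-1,1]` has
an odd representation at level `m`. -/
theorem oddRep_of_nonneg {m : ℕ} {g : Polynomial ℝ} (hdeg : g.natDegree ≤ 2 * m + 1)
    (hnn : ∀ x ∈ Set.Icc (-1:ℝ) 1, 0 ≤ g.eval x) : OddRep m g :=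
  (main_rep g.natDegree g le_rfl hnn).2 m hdeg


open Polynomial.Chebyshev in
lemma T_natDegree_le : ∀ n : ℕ, (T ℝ n).natDegree ≤ n := by
  intro n
  induction n using Nat.twoStepInduction with
  | zero => simp
  | one => simp
  | more k ih1 ih2 =>
    have : ((k : ℤ) + 2) = ((k + 2 : ℕ) : ℤ) := by push_cast; ring
    rw [show ((k + 2 : ℕ) : ℤ) = (k : ℤ) + 2 by push_cast; ring, T_add_two]
    refine (natDegree_sub_le _ _).trans (max_le ?_ ?_)
    · refine (natDegree_mul_le).trans ?_
      have h2X : (2 * X : Polynomial ℝ).natDegree ≤ 1 :=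
        (natDegree_mul_le).trans (by simp)
      have : ((k : ℤ) + 1) = ((k + 1 : ℕ) : ℤ) := by push_cast; ring
      rw [this]
      omega
    · omega

open Polynomial.Chebyshev in
lemma T_coeff_succ : ∀ n : ℕ, (T ℝ (n + 1 : ℕ)).coeff (n + 1) = 2 ^ n := by
  intro n
  induction n using Nat.twoStepInduction with
  | zero => simp
  | one =>
    rw [show ((1 + 1 : ℕ) : ℤ) = 2 by norm_num, T_two]
    simp [coeff_sub, coeff_ofNat_mul, coeff_one]
  | more k ih1 ih2 =>
    rw [show ((k + 2 + 1 : ℕ) : ℤ) = ((k : ℤ) + 1) + 2 by push_cast; ring, T_add_two]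
    rw [coeff_sub]
    have hT : (T ℝ ((k : ℤ) + 1)).coeff (k + 3) = 0 := by
      apply coeff_eq_zero_of_natDegree_lt
      have := T_natDegree_le (k + 1)
      rw [show ((k + 1 : ℕ) : ℤ) = (k : ℤ) + 1 by push_cast; ring] at this
      omega
    have hmul : (2 * X * T ℝ ((k : ℤ) + 1 + 1)).coeff (k + 2 + 1)
        = 2 * (T ℝ ((k : ℤ) + 2)).coeff (k + 2) := by
      rw [mul_assoc, show ((k : ℤ) + 1 + 1) = (k : ℤ) + 2 by ring, coeff_ofNat_mul,
        coeff_X_mul]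
    rw [show (k + 2 + 1) = (k + 3) by ring] at hmul ⊢
    rw [hmul, hT, sub_zero]
    have : (T ℝ ((k : ℤ) + 2)).coeff (k + 2) = 2 ^ (k + 1) := by
      have h := ih2
      rw [show ((k + 1 + 1 : ℕ) : ℤ) = (k : ℤ) + 2 by push_cast; ring] at h
      exact_mod_cast h
    rw [this]
    ring

open Polynomial.Chebyshev in
/-- Every polynomial of degree at most `m` is a linear combination of `T 0, …, T m`. -/
lemma cheb_coords : ∀ (m : ℕ) (f : Polynomial ℝ), f.natDegree ≤ m →
    ∃ u : Fin (m + 1) → ℝ, f = ∑ i : Fin (m + 1), C (u i) * T ℝ (i : ℕ) := by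
  intro m
  induction m with
  | zero =>
    intro f hf
    refine ⟨fun _ => f.coeff 0, ?_⟩
    rw [eq_C_of_natDegree_le_zero hf]
    simp
  | succ m ih =>
    intro f hf
    set c : ℝ := f.coeff (m + 1) / 2 ^ m with hc
    set g : Polynomial ℝ := f - C c * T ℝ (m + 1 : ℕ) with hg
    have hgdeg : g.natDegree ≤ m := by
      rw [natDegree_le_iff_coeff_eq_zero]
      intro N hN
      rcases eq_or_lt_of_le (Nat.succ_le_of_lt hN) with h | h
      · rw [hg, coeff_sub, coeff_C_mul, ← h]
        rw [show ((m + 1 : ℕ) : ℤ) = ((m + 1 : ℕ) : ℤ) from rfl, T_coeff_succ m, hc]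
        field_simp
        ring
      · rw [hg, coeff_sub, coeff_C_mul]
        have h1 : f.coeff N = 0 := coeff_eq_zero_of_natDegree_lt (by omega)
        have h2 : (T ℝ (m + 1 : ℕ)).coeff N = 0 :=
          coeff_eq_zero_of_natDegree_lt (lt_of_le_of_lt (T_natDegree_le (m+1)) (by omega))
        rw [h1, h2]
        ring
    obtain ⟨u, hu⟩ := ih g hgdeg
    refine ⟨Fin.snoc u c, ?_⟩
    rw [Fin.sum_univ_castSucc]
    have hlast : ((Fin.last (m + 1) : Fin (m + 2)) : ℕ) = m + 1 := rfl
    have : ∑ i : Fin (m + 1), C ((Fin.snoc u c : Fin (m+2) → ℝ) (Fin.castSucc i)) * T ℝ ((Fin.castSucc i : Fin (m+2)) : ℕ)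
        = ∑ i : Fin (m + 1), C (u i) * T ℝ (i : ℕ) := by
      apply Finset.sum_congr rfl
      intro i _
      rw [Fin.snoc_castSucc]
      norm_num
    rw [this, ← hu, hlast, Fin.snoc_last, hg]
    ring


open Polynomial.Chebyshev in
/-- A sum of squares of polynomials of degree `≤ m` is a PSD quadratic form
in the Chebyshev basis `T 0, …, T m`. -/
lemma sos_to_matrix {m : ℕ} {F : Polynomial ℝ} (hF : F ∈ SOSle m) :
    ∃ S : Matrix (Fin (m + 1)) (Fin (m + 1)) ℝ, S.PosSemidef ∧
      ∀ x : ℝ, F.eval x = ∑ i, ∑ j, S i j * (T ℝ (i : ℕ)).eval x * (T ℝ (j : ℕ)).eval x := by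
  induction hF using AddSubmonoid.closure_induction with
  | mem G hG =>
    obtain ⟨f, hf, rfl⟩ := hG
    obtain ⟨u, hu⟩ := cheb_coords m f hf
    refine ⟨Matrix.of fun i j => u i * u j, ?_, ?_⟩
    · refine Matrix.PosSemidef.of_dotProduct_mulVec_nonneg ?_ ?_
      · ext i j
        simp [Matrix.conjTranspose_apply, mul_comm]
      · intro v
        have : dotProduct (star v) ((Matrix.of fun i j => u i * u j).mulVec v)
            = (∑ j, u j * v j) ^ 2 := by
          simp only [dotProduct, Matrix.mulVec, star_trivial, Matrix.of_apply]
          rw [sq, Finset.sum_mul_sum]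
          apply Finset.sum_congr rfl
          intro i _
          rw [Finset.mul_sum]
          apply Finset.sum_congr rfl
          intro j _
          ring
        rw [this]
        exact sq_nonneg _
    · intro x
      rw [eval_pow, hu, eval_finset_sum]
      simp only [eval_mul, eval_C]
      rw [sq, Finset.sum_mul_sum]
      apply Finset.sum_congr rfl
      intro i _
      apply Finset.sum_congr rfl
      intro j _
      simp only [Matrix.of_apply]
      ring
  | zero =>
    exact ⟨0, Matrix.PosSemidef.zero, fun x => by simp⟩
  | add G G' hG hG' ihG ihG' =>
    obtain ⟨S, hS, hSx⟩ := ihG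
    obtain ⟨S', hS', hSx'⟩ := ihG'
    refine ⟨S + S', hS.add hS', fun x => ?_⟩
    rw [eval_add, hSx x, hSx' x, ← Finset.sum_add_distrib]
    apply Finset.sum_congr rfl
    intro i _
    rw [← Finset.sum_add_distrib]
    apply Finset.sum_congr rfl
    intro j _
    simp only [Matrix.add_apply]
    ring

end ChebSDP

/-- Semidefinite characterization of polynomials nonnegative on `[-1,1]`
in the Chebyshev basis: for odd `p`, `g` of degree ≤ `p` is nonnegative on `[-1,1]`
iff `g(x) = (1+x) T(x)ᵀ S₁ T(x) + (1-x) T(x)ᵀ S₂ T(x)` for some PSD `S₁, S₂`. -/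
theorem nonneg_iff_chebyshev_sdp (p : ℕ) (hp : Odd p) (g : Polynomial ℝ)
    (hdeg : g.natDegree ≤ p) :
    (∀ x ∈ Set.Icc (-1:ℝ) 1, 0 ≤ g.eval x) ↔
      ∃ S₁ S₂ : Matrix (Fin ((p + 1) / 2)) (Fin ((p + 1) / 2)) ℝ,
        S₁.PosSemidef ∧ S₂.PosSemidef ∧
        ∀ x : ℝ, g.eval x =
          (1 + x) * (∑ i, ∑ j, S₁ i j *
            (Polynomial.Chebyshev.T ℝ (i : ℕ)).eval x *
            (Polynomial.Chebyshev.T ℝ (j : ℕ)).eval x) +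
          (1 - x) * (∑ i, ∑ j, S₂ i j *
            (Polynomial.Chebyshev.T ℝ (i : ℕ)).eval x *
            (Polynomial.Chebyshev.T ℝ (j : ℕ)).eval x) := by
  obtain ⟨k, rfl⟩ := hp
  have hhalf : (2 * k + 1 + 1) / 2 = k + 1 := by omega
  constructor
  · intro hnn
    obtain ⟨F, H, hF, hH, hrep⟩ := ChebSDP.oddRep_of_nonneg (m := k) hdeg hnn
    obtain ⟨S₁, hS₁, hS₁x⟩ := ChebSDP.sos_to_matrix hF
    obtain ⟨S₂, hS₂, hS₂x⟩ := ChebSDP.sos_to_matrix hH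
    rw [hhalf]
    refine ⟨S₁, S₂, hS₁, hS₂, fun x => ?_⟩
    rw [hrep]
    simp only [eval_add, eval_mul, eval_sub, eval_one, eval_X]
    rw [hS₁x x, hS₂x x]
  · rw [hhalf]
    rintro ⟨S₁, S₂, hS₁, hS₂, hid⟩ x hx
    rw [hid x]
    set v : Fin (k + 1) → ℝ := fun i => (Polynomial.Chebyshev.T ℝ (i : ℕ)).eval x with hv
    have key : ∀ (S : Matrix (Fin (k+1)) (Fin (k+1)) ℝ), S.PosSemidef →
        0 ≤ ∑ i, ∑ j, S i j * v i * v j := by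
      intro S hS
      have h := hS.dotProduct_mulVec_nonneg v
      have heq : dotProduct (star v) (S.mulVec v) = ∑ i, ∑ j, S i j * v i * v j := by
        simp only [dotProduct, Matrix.mulVec, star_trivial]
        apply Finset.sum_congr rfl
        intro i _
        rw [Finset.mul_sum]
        apply Finset.sum_congr rfl
        intro j _
        ring
      rwa [heq] at h
    have h1 : (0:ℝ) ≤ 1 + x := by linarith [hx.1]
    have h2 : (0:ℝ) ≤ 1 - x := by linarith [hx.2]
    exact add_nonneg (mul_nonneg h1 (key S₁ hS₁)) (mul_nonneg h2 (key S₂ hS₂))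
end
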